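/- arXiv:0904.4739 — 8 statements merged into one kernel-verified Lean document; each statement's English description precedes it below -/
import Mathlib

section
/- Let X be a locally path connected topological space. Then the topological fundamental group π₁^top(X,x) is discrete for every x ∈ X if and only if X is semilocally simply-connected. -/
attribute [local instance] Path.Homotopic.setoid

/-- The topological fundamental group: homotopy classes of loops at `x` with the
quotient topology induced from the compact-open topology on the loop space. -/
instance piTopTopology {X : Type*} [TopologicalSpace X] (x y : X) :
    TopologicalSpace (Path.Homotopic.Quotient x y) :=
  inferInstanceAs (TopologicalSpace (Quotient (Path.Homotopic.setoid x y)))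

/-- `X` is semilocally simply-connected: every point has an open neighborhood `U`
such that the inclusion-induced homomorphism `π₁(U,x) → π₁(X,x)` is trivial, i.e.
every loop in `U` based at `x` is null-homotopic in `X`. -/
def SemilocallySimplyConnected (X : Type*) [TopologicalSpace X] : Prop :=
  ∀ x : X, ∃ (U : Set X) (_ : IsOpen U) (hx : x ∈ U),
    ∀ γ : Path (⟨x, hx⟩ : U) (⟨x, hx⟩ : U),
      (γ.map continuous_subtype_val).Homotopic (Path.refl x)

open Set unitInterval

namespace SSCProof

variable {X : Type*} [TopologicalSpace X]

/-- affine map of `I` onto `[a,b]`. -/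
def affI (a b : I) : I → I := fun t =>
  ⟨(1 - (t : ℝ)) * a + t * b, by
    obtain ⟨t, ht0, ht1⟩ := t
    obtain ⟨a, ha0, ha1⟩ := a
    obtain ⟨b, hb0, hb1⟩ := b
    constructor <;> simp only <;> nlinarith⟩

lemma affI_continuous (a b : I) : Continuous (affI a b) := by
  apply Continuous.subtype_mk
  fun_prop

@[simp] lemma affI_coe (a b : I) (t : I) :
    (affI a b t : ℝ) = (1 - (t : ℝ)) * a + t * b := rfl

@[simp] lemma affI_zero (a b : I) : affI a b 0 = a := by
  ext; simp

@[simp] lemma affI_one (a b : I) : affI a b 1 = b := by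
  ext; simp

lemma affI_self (a : I) (t : I) : affI a a t = a := by
  ext; simp; ring

lemma affI_mem (a b : I) (hab : a ≤ b) (t : I) : affI a b t ∈ Icc a b := by
  obtain ⟨t, ht0, ht1⟩ := t
  constructor <;> rw [← Subtype.coe_le_coe] <;> simp <;> nlinarith [Subtype.coe_le_coe.2 hab]

/-- restriction of a path to `[a,b]`, affinely reparametrized. -/
def pres {u v : X} (γ : Path u v) (a b : I) : Path (γ a) (γ b) where
  toFun t := γ (affI a b t)
  continuous_toFun := γ.continuous.comp (affI_continuous a b)
  source' := by simp
  target' := by simp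

@[simp] lemma pres_apply {u v : X} (γ : Path u v) (a b : I) (t : I) :
    pres γ a b t = γ (affI a b t) := rfl

/-- Two reparametrizations of a path `γ` by maps `g₁ g₂ : I → I` agreeing at the endpoints
are homotopic rel endpoints. -/
theorem homotopic_of_comp {u v w z : X} (γ : Path u v) {g₁ g₂ : I → I}
    (hg₁ : Continuous g₁) (hg₂ : Continuous g₂) (h0 : g₁ 0 = g₂ 0) (h1 : g₁ 1 = g₂ 1)
    (p q : Path w z) (hp : ∀ t, p t = γ (g₁ t)) (hq : ∀ t, q t = γ (g₂ t)) :
    p.Homotopic q := by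
  have hmem : ∀ st : I × I, (1 - (st.1 : ℝ)) * g₁ st.2 + st.1 * g₂ st.2 ∈ Icc (0:ℝ) 1 := by
    rintro ⟨⟨s, hs0, hs1⟩, t⟩
    have h1' := (g₁ t).2.1
    have h2' := (g₁ t).2.2
    have h3' := (g₂ t).2.1
    have h4' := (g₂ t).2.2
    constructor <;> simp only <;> nlinarith
  refine ⟨⟨⟨⟨fun st => γ ⟨(1 - (st.1 : ℝ)) * g₁ st.2 + st.1 * g₂ st.2, hmem st⟩, ?_⟩, ?_, ?_⟩, ?_⟩⟩
  · apply γ.continuous.comp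
    apply Continuous.subtype_mk
    have : Continuous fun st : I × I => (g₁ st.2 : ℝ) := by
      exact continuous_subtype_val.comp (hg₁.comp continuous_snd)
    have : Continuous fun st : I × I => (g₂ st.2 : ℝ) := by
      exact continuous_subtype_val.comp (hg₂.comp continuous_snd)
    fun_prop
  · intro t
    show γ _ = p t
    rw [hp t]
    congr 1
    ext
    simp
  · intro t
    show γ _ = q t
    rw [hq t]
    congr 1
    ext
    simp
  · intro s t ht
    have hc0 : ((g₁ 0 : I) : ℝ) = g₂ 0 := by rw [h0]
    have hc1 : ((g₁ 1 : I) : ℝ) = g₂ 1 := by rw [h1]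
    rcases ht with h | h
    · subst h
      show γ _ = p 0
      rw [hp 0]
      congr 1
      ext
      show (1 - (s : ℝ)) * g₁ 0 + s * g₂ 0 = g₁ 0
      rw [← hc0]; ring
    · simp only [mem_singleton_iff] at h
      subst h
      show γ _ = p 1
      rw [hp 1]
      congr 1
      ext
      show (1 - (s : ℝ)) * g₁ 1 + s * g₂ 1 = g₁ 1
      rw [← hc1]; ring

/-- parametrization function of the concatenation of two reparametrizations. -/
noncomputable def transReparam (g₁ g₂ : I → I) : I → I := fun t =>
  if (t : ℝ) ≤ 1 / 2 then g₁ (Set.projIcc 0 1 zero_le_one (2 * t))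
  else g₂ (Set.projIcc 0 1 zero_le_one (2 * t - 1))

lemma transReparam_continuous {g₁ g₂ : I → I} (hg₁ : Continuous g₁) (hg₂ : Continuous g₂)
    (h : g₁ 1 = g₂ 0) : Continuous (transReparam g₁ g₂) := by
  apply Continuous.if_le
  · exact hg₁.comp (continuous_projIcc.comp (by fun_prop))
  · exact hg₂.comp (continuous_projIcc.comp (by fun_prop))
  · fun_prop
  · fun_prop
  · intro t ht
    have h2 : (2 : ℝ) * t = 1 := by linarith
    have h3 : (2 : ℝ) * t - 1 = 0 := by linarith
    rw [h2]
    norm_num [h]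

lemma transReparam_zero (g₁ g₂ : I → I) : transReparam g₁ g₂ 0 = g₁ 0 := by
  simp [transReparam]

lemma transReparam_one (g₁ g₂ : I → I) : transReparam g₁ g₂ 1 = g₂ 1 := by
  have : ¬ ((1 : I) : ℝ) ≤ 1 / 2 := by norm_num
  simp only [transReparam, this, if_false]
  norm_num

lemma trans_comp {u v a b c : X} (γ : Path u v) {g₁ g₂ : I → I}
    (p : Path a b) (q : Path b c)
    (hp : ∀ t, p t = γ (g₁ t)) (hq : ∀ t, q t = γ (g₂ t)) (t : I) :
    (p.trans q) t = γ (transReparam g₁ g₂ t) := by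
  rw [Path.trans_apply, transReparam]
  split_ifs with h
  · rw [hp]
    congr 2
    rw [Set.projIcc_of_mem]
  · rw [hq]
    congr 2
    rw [Set.projIcc_of_mem]

/-! ### Homotopic algebra -/

lemma htpc_assoc {x₀ x₁ x₂ x₃ : X} (p : Path x₀ x₁) (q : Path x₁ x₂) (r : Path x₂ x₃) :
    ((p.trans q).trans r).Homotopic (p.trans (q.trans r)) :=
  ⟨Path.Homotopy.transAssoc p q r⟩

lemma htpc_trans_refl {x₀ x₁ : X} (p : Path x₀ x₁) :
    (p.trans (Path.refl x₁)).Homotopic p :=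
  ⟨Path.Homotopy.transRefl p⟩

lemma htpc_refl_trans {x₀ x₁ : X} (p : Path x₀ x₁) :
    ((Path.refl x₀).trans p).Homotopic p :=
  ⟨Path.Homotopy.reflTrans p⟩

lemma htpc_trans_symm {x₀ x₁ : X} (p : Path x₀ x₁) :
    (p.trans p.symm).Homotopic (Path.refl x₀) :=
  ⟨(Path.Homotopy.reflTransSymm p).symm⟩

lemma htpc_symm_trans {x₀ x₁ : X} (p : Path x₀ x₁) :
    (p.symm.trans p).Homotopic (Path.refl x₁) :=
  ⟨(Path.Homotopy.reflSymmTrans p).symm⟩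

lemma cancel_left {w a b : X} {r : Path w a} {p q : Path a b}
    (h : (r.trans p).Homotopic (r.trans q)) : p.Homotopic q := by
  have h1 : p.Homotopic (r.symm.trans (r.trans p)) :=
    ((htpc_refl_trans p).symm.trans
      (Path.Homotopic.hcomp (htpc_symm_trans r).symm (Path.Homotopic.refl p))).trans
      (htpc_assoc _ _ _)
  have h2 : (r.symm.trans (r.trans q)).Homotopic q :=
    ((htpc_assoc _ _ _).symm.trans
      (Path.Homotopic.hcomp (htpc_symm_trans r) (Path.Homotopic.refl q))).trans
      (htpc_refl_trans q)
  exact (h1.trans (Path.Homotopic.hcomp (Path.Homotopic.refl r.symm) h)).trans h2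

lemma cancel_right {a b c : X} {p q : Path a b} {r : Path b c}
    (h : (p.trans r).Homotopic (q.trans r)) : p.Homotopic q := by
  have key : ∀ s : Path a b, ((s.trans r).trans r.symm).Homotopic s := fun s =>
    ((htpc_assoc _ _ _).trans
      (Path.Homotopic.hcomp (Path.Homotopic.refl s) (htpc_trans_symm r))).trans
      (htpc_trans_refl s)
  exact ((key p).symm.trans
    (Path.Homotopic.hcomp h (Path.Homotopic.refl r.symm))).trans (key q)

/-- If `p.trans q.symm` is nullhomotopic then `p` is homotopic to `q`. -/
lemma homotopic_of_trans_symm {a b : X} {p q : Path a b}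
    (h : (p.trans q.symm).Homotopic (Path.refl a)) : p.Homotopic q := by
  apply cancel_right (r := q.symm)
  exact h.trans (htpc_trans_symm q).symm

lemma cast_homotopic {a b a' b' : X} (p q : Path a b) (ha : a' = a) (hb : b' = b)
    (h : (p.cast ha hb).Homotopic (q.cast ha hb)) : p.Homotopic q := by
  subst ha
  subst hb
  have hp : p.cast rfl rfl = p := by ext t; rfl
  have hq : q.cast rfl rfl = q := by ext t; rfl
  rwa [hp, hq] at h

/-- In a path-connected set all of whose loops at a fixed basepoint are nullhomotopic
(in the ambient space), any two paths with the same endpoints are homotopic. -/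
lemma paths_homotopic_of_null {W : Set X} (hW : IsPathConnected W) {w₀ : X} (hw₀ : w₀ ∈ W)
    (hnull : ∀ γ : Path w₀ w₀, (∀ t, γ t ∈ W) → γ.Homotopic (Path.refl w₀))
    {a b : X} (p q : Path a b) (hp : ∀ t, p t ∈ W) (hq : ∀ t, q t ∈ W) :
    p.Homotopic q := by
  have ha : a ∈ W := by have := hp 0; rwa [p.source] at this
  have hr : JoinedIn W w₀ a := hW.joinedIn w₀ hw₀ a ha
  set r : Path w₀ a := hr.somePath with hrdef
  have hrW : ∀ t, r t ∈ W := hr.somePath_mem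
  set s : Path a a := p.trans q.symm with hsdef
  have hsW : ∀ t, s t ∈ W := by
    intro t
    have : s t ∈ Set.range (p.trans q.symm) := ⟨t, rfl⟩
    rw [Path.trans_range] at this
    rcases this with ⟨t', ht'⟩ | ⟨t', ht'⟩
    · rw [← ht']; exact hp t'
    · rw [← ht']
      show q.symm t' ∈ W
      exact hq _
  -- the conjugated loop is in `W`
  have hLW : ∀ t, ((r.trans s).trans r.symm) t ∈ W := by
    intro t
    have : ((r.trans s).trans r.symm) t ∈ Set.range ((r.trans s).trans r.symm) := ⟨t, rfl⟩
    rw [Path.trans_range, Path.trans_range] at this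
    rcases this with (⟨t', ht'⟩ | ⟨t', ht'⟩) | ⟨t', ht'⟩
    · rw [← ht']; exact hrW t'
    · rw [← ht']; exact hsW t'
    · rw [← ht']; exact hrW _
  have h1 : ((r.trans s).trans r.symm).Homotopic (Path.refl w₀) := hnull _ hLW
  have h2 : ((r.trans (Path.refl a)).trans r.symm).Homotopic (Path.refl w₀) :=
    (Path.Homotopic.hcomp (Path.Homotopic.hcomp (Path.Homotopic.refl r) (Path.Homotopic.refl _))
      (Path.Homotopic.refl r.symm)).trans
      ((Path.Homotopic.hcomp (htpc_trans_refl r) (Path.Homotopic.refl r.symm)).trans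
        (htpc_trans_symm r))
  have h3 : (r.trans s).Homotopic (r.trans (Path.refl a)) :=
    cancel_right (h1.trans h2.symm)
  have h4 : s.Homotopic (Path.refl a) := cancel_left h3
  exact homotopic_of_trans_symm h4


lemma trans_mem {a b c : X} {p : Path a b} {q : Path b c} {W : Set X}
    (hp : ∀ t, p t ∈ W) (hq : ∀ t, q t ∈ W) : ∀ t, (p.trans q) t ∈ W := by
  intro t
  have : (p.trans q) t ∈ Set.range (p.trans q) := ⟨t, rfl⟩
  rw [Path.trans_range] at this
  rcases this with ⟨t', ht'⟩ | ⟨t', ht'⟩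
  · rw [← ht']; exact hp t'
  · rw [← ht']; exact hq t'

/-- From semilocal simple connectivity and local path connectivity: arbitrarily small
"good" neighborhoods in which any two paths with common endpoints are homotopic in `X`. -/
lemma exists_good [LocallyPathConnectedSpace X] (h : SemilocallySimplyConnected X) (y : X)
    {S : Set X} (hS : S ∈ nhds y) :
    ∃ W : Set X, IsOpen W ∧ y ∈ W ∧ W ⊆ S ∧ IsPathConnected W ∧
      ∀ ⦃a b : X⦄ (p q : Path a b), (∀ t, p t ∈ W) → (∀ t, q t ∈ W) → p.Homotopic q := by
  obtain ⟨U, hUopen, hyU, hU⟩ := h y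
  have hUS : U ∩ S ∈ nhds y := Filter.inter_mem (hUopen.mem_nhds hyU) hS
  obtain ⟨W, ⟨hWopen, hyW, hWpc⟩, hWsub⟩ := (isOpen_isPathConnected_basis y).mem_iff.mp hUS
  refine ⟨W, hWopen, hyW, fun z hz => (hWsub hz).2, hWpc, ?_⟩
  intro a b p q hp hq
  apply paths_homotopic_of_null hWpc hyW ?_ p q hp hq
  intro γ hγ
  have hγU : ∀ t, γ t ∈ U := fun t => (hWsub (hγ t)).1
  let γ' : Path (⟨y, hyU⟩ : U) (⟨y, hyU⟩ : U) :=
    { toFun := fun t => ⟨γ t, hγU t⟩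
      continuous_toFun := γ.continuous.subtype_mk _
      source' := by ext; simp
      target' := by ext; simp }
  have hmap : γ'.map continuous_subtype_val = γ := by ext t; rfl
  rw [← hmap]
  exact hU γ'

/-- The key lemma: every loop has an open neighborhood consisting of loops homotopic to it. -/
theorem exists_homotopic_nhd [LocallyPathConnectedSpace X] (h : SemilocallySimplyConnected X)
    {x : X} (δ : Path x x) :
    ∃ N : Set (Path x x), IsOpen N ∧ δ ∈ N ∧ ∀ η ∈ N, η.Homotopic δ := by
  classical
  -- good sets around every point of the loop
  have hgood : ∀ s : I, ∃ W : Set X, IsOpen W ∧ δ s ∈ W ∧ IsPathConnected W ∧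
      ∀ ⦃a b : X⦄ (p q : Path a b), (∀ t, p t ∈ W) → (∀ t, q t ∈ W) → p.Homotopic q := by
    intro s
    obtain ⟨W, h1, h2, _, h4, h5⟩ := exists_good h (δ s) Filter.univ_mem
    exact ⟨W, h1, h2, h4, h5⟩
  choose Wf hWopen hWmem hWpc hWpair using hgood
  -- Lebesgue number for the covering of `I`
  obtain ⟨ε, hε, hball⟩ := lebesgue_number_lemma_of_metric (s := (univ : Set I))
    (c := fun s : I => δ ⁻¹' Wf s) isCompact_univ
    (fun s => (hWopen s).preimage δ.continuous)
    (fun t _ => Set.mem_iUnion.2 ⟨t, hWmem t⟩)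
  obtain ⟨n, hn⟩ := exists_nat_one_div_lt hε
  set m : ℕ := n + 1 with hm
  have hm0 : 0 < m := Nat.succ_pos n
  have hmR : (0:ℝ) < m := by exact_mod_cast hm0
  have hmε : (1:ℝ) / m < ε := by exact_mod_cast hn
  -- subdivision points
  set T : ℕ → I := fun k => Set.projIcc 0 1 zero_le_one ((k : ℝ) / m) with hT
  have hTval : ∀ k, k ≤ m → (T k : ℝ) = (k : ℝ) / m := by
    intro k hk
    have hmem : (k : ℝ) / m ∈ Icc (0:ℝ) 1 := by
      constructor
      · positivity
      · rw [div_le_one hmR]; exact_mod_cast hk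
    rw [hT]
    simp only
    rw [Set.projIcc_of_mem zero_le_one hmem]
  have hT0 : T 0 = 0 := by ext; rw [hTval 0 (Nat.zero_le m)]; simp
  have hTm : T m = 1 := by ext; rw [hTval m le_rfl]; field_simp; simp
  have hTle : ∀ k, k < m → T k ≤ T (k + 1) := by
    intro k hk
    rw [← Subtype.coe_le_coe, hTval k hk.le, hTval (k+1) hk]
    gcongr
    exact_mod_cast Nat.le_succ k
  -- each subdivision interval maps into some good set
  have hseg : ∀ k : ℕ, ∃ s : I, k < m → ∀ t ∈ Icc (T k) (T (k + 1)), δ t ∈ Wf s := by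
    intro k
    by_cases hk : k < m
    · obtain ⟨s, hs⟩ := hball (T k) trivial
      refine ⟨s, fun _ t ht => hs ?_⟩
      rw [Metric.mem_ball, Subtype.dist_eq, Real.dist_eq, abs_of_nonneg (by
        simp only [sub_nonneg, Subtype.coe_le_coe]; exact ht.1)]
      have h1 : (t : ℝ) ≤ T (k + 1) := Subtype.coe_le_coe.2 ht.2
      have h2 : ((T (k+1) : I) : ℝ) - T k = 1 / m := by
        rw [hTval (k+1) hk, hTval k hk.le]
        push_cast
        field_simp
        ring
      have h3 : ((T k : I) : ℝ) ≤ t := Subtype.coe_le_coe.2 ht.1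
      calc (t : ℝ) - T k ≤ ((T (k+1) : I) : ℝ) - T k := by linarith
        _ = 1 / m := h2
        _ < ε := hmε
    · exact ⟨0, fun h => absurd h hk⟩
  choose sf hsf using hseg
  set G : ℕ → Set X := fun k => Wf (sf k) with hGdef
  have hG : ∀ k, k < m → ∀ t ∈ Icc (T k) (T (k + 1)), δ t ∈ G k := fun k hk => hsf k hk
  have hGopen : ∀ k, IsOpen (G k) := fun k => hWopen _
  have hGpair : ∀ k ⦃a b : X⦄ (p q : Path a b),
      (∀ t, p t ∈ G k) → (∀ t, q t ∈ G k) → p.Homotopic q := fun k => hWpair _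
  -- junction good sets
  have hjunc : ∀ k : ℕ, ∃ Z : Set X, k ≤ m → (IsOpen Z ∧ δ (T k) ∈ Z ∧ IsPathConnected Z ∧
      (∀ ⦃a b : X⦄ (p q : Path a b), (∀ t, p t ∈ Z) → (∀ t, q t ∈ Z) → p.Homotopic q) ∧
      (0 < k → Z ⊆ G (k - 1)) ∧ (k < m → Z ⊆ G k)) := by
    intro k
    by_cases hk : k ≤ m
    swap
    · exact ⟨∅, fun h => absurd h hk⟩
    have hS : ((if 0 < k then G (k - 1) else univ) ∩ (if k < m then G k else univ)) ∈
        nhds (δ (T k)) := by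
      apply Filter.inter_mem
      · split_ifs with h0
        · apply ((hGopen (k-1)).mem_nhds)
          apply hG (k - 1) (by omega) (T k)
          have hkk : k - 1 + 1 = k := by omega
          have hstep : T (k - 1) ≤ T (k - 1 + 1) := hTle (k - 1) (by omega)
          rw [hkk] at hstep ⊢
          exact ⟨hstep, le_refl _⟩
        · exact Filter.univ_mem
      · split_ifs with h0
        · exact ((hGopen k).mem_nhds) (hG k h0 (T k) ⟨le_refl _, hTle k h0⟩)
        · exact Filter.univ_mem
    obtain ⟨Z, hZo, hZm, hZsub, hZpc, hZpair⟩ := exists_good h (δ (T k)) hS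
    refine ⟨Z, fun _ => ⟨hZo, hZm, hZpc, hZpair, ?_, ?_⟩⟩
    · intro h0 z hz
      have := (hZsub hz).1
      rwa [if_pos h0] at this
    · intro h0 z hz
      have := (hZsub hz).2
      rwa [if_pos h0] at this
  choose Z hZ using hjunc
  -- the neighborhood
  set N : Set (Path x x) := {η : Path x x |
    (∀ k, k < m → ∀ t ∈ Icc (T k) (T (k + 1)), η t ∈ G k) ∧
    (∀ k, k ≤ m → η (T k) ∈ Z k)} with hNdef
  have hNopen : IsOpen N := by
    have heq : N = (⋂ k ∈ Finset.range m,
          {η : Path x x | MapsTo ⇑η (Icc (T k) (T (k + 1))) (G k)}) ∩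
        (⋂ k ∈ Finset.range (m + 1), {η : Path x x | η (T k) ∈ Z k}) := by
      ext η
      simp only [hNdef, mem_setOf_eq, mem_inter_iff, mem_iInter, Finset.mem_range,
        Nat.lt_succ_iff]
      exact ⟨fun ⟨h1, h2⟩ => ⟨fun k hk t ht => h1 k hk t ht, fun k hk => h2 k hk⟩,
        fun ⟨h1, h2⟩ => ⟨fun k hk t ht => h1 k hk ht, fun k hk => h2 k hk⟩⟩
    rw [heq]
    apply IsOpen.inter
    · apply isOpen_biInter_finset
      intro k hk
      have : {η : Path x x | MapsTo ⇑η (Icc (T k) (T (k + 1))) (G k)} =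
          ((↑) : Path x x → C(I, X)) ⁻¹' {f : C(I, X) | MapsTo ⇑f (Icc (T k) (T (k + 1))) (G k)} :=
        rfl
      rw [this]
      exact (ContinuousMap.isOpen_setOf_mapsTo (isClosed_Icc.isCompact) (hGopen k)).preimage
        continuous_induced_dom
    · apply isOpen_biInter_finset
      intro k hk
      have hko : k ≤ m := by simpa [Nat.lt_succ_iff] using hk
      exact (hZ k hko).1.preimage (continuous_eval_const (T k))
  have hδN : δ ∈ N := by
    constructor
    · exact fun k hk t ht => hG k hk t ht
    · exact fun k hk => (hZ k hk).2.1
  refine ⟨N, hNopen, hδN, ?_⟩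
  intro η hη
  obtain ⟨hη1, hη2⟩ := hη
  -- junction paths
  have hjoin : ∀ k, k ≤ m → JoinedIn (Z k) (δ (T k)) (η (T k)) := fun k hk =>
    (hZ k hk).2.2.1.joinedIn _ ((hZ k hk).2.1) _ (hη2 k hk)
  -- initial segments
  have hx0δ : x = δ (T 0) := by rw [hT0, δ.source]
  have hx0η : x = η (T 0) := by rw [hT0, η.source]
  -- the inductive comparison along the subdivision
  have key : ∀ k, ∀ hk : k ≤ m,
      (((pres δ (T 0) (T k)).cast hx0δ rfl).trans (hjoin k hk).somePath).Homotopic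
        ((pres η (T 0) (T k)).cast hx0η rfl) := by
    intro k
    induction k with
    | zero =>
      intro hk
      apply (hZ 0 (Nat.zero_le m)).2.2.2.1
      · apply trans_mem
        · intro t
          have hc : ((pres δ (T 0) (T 0)).cast hx0δ rfl) t = δ (T 0) := by
            show pres δ (T 0) (T 0) t = δ (T 0)
            rw [pres_apply, affI_self]
          rw [hc]
          exact (hZ 0 (Nat.zero_le m)).2.1
        · exact fun t => (hjoin 0 hk).somePath_mem t
      · intro t
        have hc : ((pres η (T 0) (T 0)).cast hx0η rfl) t = η (T 0) := by
          show pres η (T 0) (T 0) t = η (T 0)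
          rw [pres_apply, affI_self]
        rw [hc]
        exact hη2 0 (Nat.zero_le m)
    | succ k IH =>
      intro hk1
      have hklt : k < m := hk1
      have hkm : k ≤ m := hklt.le
      set c : Path (δ (T k)) (η (T k)) := (hjoin k hkm).somePath with hc
      set c' : Path (δ (T (k+1))) (η (T (k+1))) := (hjoin (k+1) hk1).somePath with hc'
      set Ak : Path x (δ (T k)) := (pres δ (T 0) (T k)).cast hx0δ rfl with hAk
      set Ak1 : Path x (δ (T (k+1))) := (pres δ (T 0) (T (k+1))).cast hx0δ rfl with hAk1
      set Bk : Path x (η (T k)) := (pres η (T 0) (T k)).cast hx0η rfl with hBk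
      set Bk1 : Path x (η (T (k+1))) := (pres η (T 0) (T (k+1))).cast hx0η rfl with hBk1
      set pδ : Path (δ (T k)) (δ (T (k+1))) := pres δ (T k) (T (k+1)) with hpδ
      set pη : Path (η (T k)) (η (T (k+1))) := pres η (T k) (T (k+1)) with hpη
      have h1δ : Ak1.Homotopic (Ak.trans pδ) := by
        apply homotopic_of_comp δ (affI_continuous (T 0) (T (k+1)))
          (transReparam_continuous (affI_continuous (T 0) (T k))
            (affI_continuous (T k) (T (k+1))) (by rw [affI_one, affI_zero]))
          (by rw [transReparam_zero, affI_zero, affI_zero])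
          (by rw [transReparam_one, affI_one, affI_one])
        · exact fun t => rfl
        · exact trans_comp δ _ _ (fun t => rfl) (fun t => rfl)
      have h1η : Bk1.Homotopic (Bk.trans pη) := by
        apply homotopic_of_comp η (affI_continuous (T 0) (T (k+1)))
          (transReparam_continuous (affI_continuous (T 0) (T k))
            (affI_continuous (T k) (T (k+1))) (by rw [affI_one, affI_zero]))
          (by rw [transReparam_zero, affI_zero, affI_zero])
          (by rw [transReparam_one, affI_one, affI_one])
        · exact fun t => rfl
        · exact trans_comp η _ _ (fun t => rfl) (fun t => rfl)
      have hZsub : ∀ t, c' t ∈ G k := by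
        intro t
        have hs : Z (k+1) ⊆ G k := by
          simpa using (hZ (k+1) hk1).2.2.2.2.1 (Nat.succ_pos k)
        exact hs ((hjoin (k+1) hk1).somePath_mem t)
      have h2 : (pδ.trans c').Homotopic (c.trans pη) := by
        apply hGpair k
        · apply trans_mem
          · exact fun t => hG k hklt _ (affI_mem _ _ (hTle k hklt) t)
          · exact hZsub
        · apply trans_mem
          · exact fun t => (hZ k hkm).2.2.2.2.2 hklt ((hjoin k hkm).somePath_mem t)
          · exact fun t => hη1 k hklt _ (affI_mem _ _ (hTle k hklt) t)
      have s1 : (Ak1.trans c').Homotopic ((Ak.trans pδ).trans c') :=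
        Path.Homotopic.hcomp h1δ (Path.Homotopic.refl c')
      have s2 : ((Ak.trans pδ).trans c').Homotopic (Ak.trans (pδ.trans c')) := htpc_assoc _ _ _
      have s3 : (Ak.trans (pδ.trans c')).Homotopic (Ak.trans (c.trans pη)) :=
        Path.Homotopic.hcomp (Path.Homotopic.refl Ak) h2
      have s4 : (Ak.trans (c.trans pη)).Homotopic ((Ak.trans c).trans pη) :=
        (htpc_assoc _ _ _).symm
      have s5 : ((Ak.trans c).trans pη).Homotopic (Bk.trans pη) :=
        Path.Homotopic.hcomp (IH hkm) (Path.Homotopic.refl pη)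
      exact ((((s1.trans s2).trans s3).trans s4).trans s5).trans h1η.symm
  -- conclusion
  have hδTm : δ (T m) = x := by rw [hTm]; exact δ.target
  have hηTm : η (T m) = x := by rw [hTm]; exact η.target
  set e : Path (δ (T m)) (η (T m)) := (Path.refl x).cast hδTm hηTm with he
  have hce : ((hjoin m le_rfl).somePath).Homotopic e := by
    apply (hZ m le_rfl).2.2.2.1
    · exact fun t => (hjoin m le_rfl).somePath_mem t
    · intro t
      show x ∈ Z m
      have := (hZ m le_rfl).2.1
      rwa [hδTm] at this
  have hfin : (((pres δ (T 0) (T m)).cast hx0δ rfl).trans e).Homotopic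
      ((pres η (T 0) (T m)).cast hx0η rfl) :=
    (Path.Homotopic.hcomp (Path.Homotopic.refl _) hce.symm).trans (key m le_rfl)
  have hδ' : (δ.cast rfl hηTm).Homotopic (((pres δ (T 0) (T m)).cast hx0δ rfl).trans e) := by
    apply homotopic_of_comp δ continuous_id
      (transReparam_continuous (affI_continuous (T 0) (T m)) continuous_const
        (by rw [affI_one]))
      (by rw [transReparam_zero, affI_zero]; exact hT0.symm)
      (by rw [transReparam_one]; exact hTm.symm)
    · exact fun t => rfl
    · exact trans_comp δ _ _ (fun t => rfl) (fun t => hδTm.symm)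
  have hη' : (η.cast rfl hηTm).Homotopic ((pres η (T 0) (T m)).cast hx0η rfl) := by
    apply homotopic_of_comp η continuous_id (affI_continuous (T 0) (T m))
      (by rw [affI_zero]; exact hT0.symm)
      (by rw [affI_one]; exact hTm.symm)
    · exact fun t => rfl
    · exact fun t => rfl
  exact cast_homotopic η δ rfl hηTm ((hη'.trans hfin.symm).trans hδ'.symm)

/-- Discreteness direction: each homotopy class of loops is open. -/
theorem discrete_of_ssc [LocallyPathConnectedSpace X] (h : SemilocallySimplyConnected X) (x : X) :
    DiscreteTopology (Path.Homotopic.Quotient x x) := by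
  apply discreteTopology_iff_isOpen_singleton.mpr
  intro a
  obtain ⟨γ, rfl⟩ := Quotient.exists_rep a
  apply isQuotientMap_quotient_mk'.isOpen_preimage.mp
  have hset : (Quotient.mk' ⁻¹' ({Quotient.mk (Path.Homotopic.setoid x x) γ} :
      Set (Path.Homotopic.Quotient x x))) = {η : Path x x | η.Homotopic γ} := by
    ext η
    simp only [mem_preimage, mem_singleton_iff, mem_setOf_eq]
    exact ⟨fun hq => Quotient.exact hq, fun hh => Quotient.sound hh⟩
  erw [hset]
  rw [isOpen_iff_forall_mem_open]
  intro δ hδ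
  obtain ⟨N, hNopen, hδN, hN⟩ := exists_homotopic_nhd h δ
  exact ⟨N, fun η hη => (hN η hη).trans hδ, hNopen, hδN⟩

/-- The converse direction: discreteness implies semilocal simple connectivity. -/
theorem ssc_of_discrete
    (hD : ∀ x : X, DiscreteTopology (Path.Homotopic.Quotient x x)) :
    SemilocallySimplyConnected X := by
  classical
  intro x
  have hV : IsOpen {γ : Path x x | γ.Homotopic (Path.refl x)} := by
    have h1 : IsOpen ({Quotient.mk (Path.Homotopic.setoid x x) (Path.refl x)} :
        Set (Path.Homotopic.Quotient x x)) := isOpen_discrete _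
    have h2 := h1.preimage
      (continuous_quotient_mk' : Continuous (Quotient.mk' : Path x x → _))
    have hset : (Quotient.mk' ⁻¹' ({Quotient.mk (Path.Homotopic.setoid x x) (Path.refl x)} :
        Set (Path.Homotopic.Quotient x x))) = {γ : Path x x | γ.Homotopic (Path.refl x)} := by
      ext η
      simp only [mem_preimage, mem_singleton_iff, mem_setOf_eq]
      exact ⟨fun hq => Quotient.exact hq, fun hh => Quotient.sound hh⟩
    rwa [hset] at h2
  obtain ⟨W', hWopen, hWpre⟩ := isOpen_induced_iff.mp hV
  have hreflW : ((Path.refl x : Path x x) : C(I, X)) ∈ W' := by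
    have : (Path.refl x : Path x x) ∈ {γ : Path x x | γ.Homotopic (Path.refl x)} :=
      Path.Homotopic.refl _
    rw [← hWpre] at this
    exact this
  have basis := TopologicalSpace.isTopologicalBasis_of_subbasis
    (ContinuousMap.compactOpen_eq (X := I) (Y := X))
  obtain ⟨B, hB, hfB, hBW⟩ := basis.exists_subset_of_mem_open hreflW hWopen
  obtain ⟨F, ⟨hFfin, hFsub⟩, rfl⟩ := hB
  have hKU : ∀ s ∈ F, ∃ (K : Set I) (U : Set X), IsCompact K ∧ IsOpen U ∧
      s = {f : C(I, X) | MapsTo ⇑f K U} := by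
    intro s hs
    obtain ⟨K, hK, U, hU, heq⟩ := hFsub hs
    exact ⟨K, U, hK, hU, heq.symm⟩
  choose! K Uf hKc hUo hseq using hKU
  set U₀ : Set X := ⋂ s ∈ F, (if K s = ∅ then univ else Uf s) with hU₀
  have hU₀open : IsOpen U₀ := by
    apply hFfin.isOpen_biInter
    intro s hs
    split_ifs with hKe
    · exact isOpen_univ
    · exact hUo s hs
  have hxU₀ : x ∈ U₀ := by
    apply mem_biInter
    intro s hs
    split_ifs with hKe
    · trivial
    · obtain ⟨t0, ht0⟩ := Set.nonempty_iff_ne_empty.2 hKe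
      have hmem : ((Path.refl x : Path x x) : C(I, X)) ∈ s := hfB s hs
      rw [hseq s hs] at hmem
      have := hmem ht0
      simpa using this
  refine ⟨U₀, hU₀open, hxU₀, ?_⟩
  intro γ
  set γ' : Path x x := γ.map continuous_subtype_val with hγ'
  have hγ'mem : ∀ t, γ' t ∈ U₀ := fun t => (γ t).2
  have hmemB : (γ' : C(I, X)) ∈ ⋂₀ F := by
    intro s hs
    rw [hseq s hs]
    intro t ht
    have hne : K s ≠ ∅ := by
      intro hcon
      rw [hcon] at ht
      exact ht
    have hmem := hγ'mem t
    rw [hU₀] at hmem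
    have h2 := mem_iInter₂.mp hmem s hs
    rwa [if_neg hne] at h2
  have : γ' ∈ {η : Path x x | η.Homotopic (Path.refl x)} := by
    rw [← hWpre]
    exact hBW hmemB
  exact this

end SSCProof

theorem discrete_iff_semilocally_simply_connected
    (X : Type*) [TopologicalSpace X] [LocallyPathConnectedSpace X] :
    (∀ x : X, DiscreteTopology (Path.Homotopic.Quotient x x)) ↔
      SemilocallySimplyConnected X :=
  ⟨SSCProof.ssc_of_discrete, fun h x => SSCProof.discrete_of_ssc h x⟩
end

section
/- Let (X,x) be a pointed topological space. If the singleton {[e_x]} consisting of the class of the constant loop is open in the topological fundamental group π₁^top(X,x), then x has a relatively inessential neighborhood in X, i.e., there exists an open neighborhood U of x such that the inclusion-induced homomorphism π₁(U,x) → π₁(X,x) is trivial. -/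
attribute [local instance] Path.Homotopic.setoid

theorem exists_relatively_inessential_nhd_of_isOpen_singleton_refl
    {X : Type*} [TopologicalSpace X] (x : X)
    (h : IsOpen ({⟦Path.refl x⟧} : Set (Path.Homotopic.Quotient x x))) :
    ∃ (U : Set X) (_ : IsOpen U) (hx : x ∈ U),
      ∀ γ : Path (⟨x, hx⟩ : U) (⟨x, hx⟩ : U),
        (γ.map continuous_subtype_val).Homotopic (Path.refl x) := by
  classical
  -- The preimage of the singleton in the loop space is open
  have hW : IsOpen ((Quotient.mk (Path.Homotopic.setoid x x)) ⁻¹'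
      ({⟦Path.refl x⟧} : Set (Path.Homotopic.Quotient x x))) :=
    h.preimage continuous_quotient_mk'
  -- The loop-space topology is induced from the compact-open topology on C(I, X)
  rw [isOpen_induced_iff] at hW
  obtain ⟨V, hVopen, hVpre⟩ := hW
  have hreflV : (Path.refl x).toContinuousMap ∈ V := by
    have : Path.refl x ∈ ((↑) : Path x x → C(unitInterval, X)) ⁻¹' V := by
      rw [hVpre]; exact rfl
    exact this
  -- Use the basis of finite intersections of subbasic compact-open sets
  have hbasis := TopologicalSpace.isTopologicalBasis_of_subbasis
      (ContinuousMap.compactOpen_eq (X := unitInterval) (Y := X))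
  obtain ⟨t, ⟨F, ⟨hFfin, hFsub⟩, rfl⟩, hct, htV⟩ :=
    hbasis.exists_subset_of_mem_open hreflV hVopen
  -- For each s ∈ F choose the compact set K and open set U
  have hchoice : ∀ s ∈ F, ∃ K U : _, IsCompact K ∧ IsOpen U ∧
      s = {g : C(unitInterval, X) | Set.MapsTo g K U} := by
    intro s hs
    obtain ⟨K, hK, U, hU, hs'⟩ := hFsub hs
    exact ⟨K, U, hK, hU, hs'.symm⟩
  choose! K U hKcomp hUopen hsEq using hchoice
  -- Define the neighborhood
  set W : Set X := ⋂ s ∈ F, (if (K s).Nonempty then U s else Set.univ) with hWdef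
  have hWopen : IsOpen W := by
    refine hFfin.isOpen_biInter fun s hs => ?_
    split
    · exact hUopen s hs
    · exact isOpen_univ
  have hxW : x ∈ W := by
    refine Set.mem_biInter fun s hs => ?_
    split
    · rename_i hne
      obtain ⟨k, hk⟩ := hne
      have hc : (Path.refl x).toContinuousMap ∈ s := Set.mem_sInter.1 hct s hs
      rw [hsEq s hs] at hc
      exact hc hk
    · trivial
  refine ⟨W, hWopen, hxW, fun γ => ?_⟩
  -- The loop γ mapped into X lies in every subbasic set, hence in V
  set g : Path x x := γ.map continuous_subtype_val with hg
  have hgV : (g : C(unitInterval, X)) ∈ V := by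
    apply htV
    refine Set.mem_sInter.2 fun s hs => ?_
    rw [hsEq s hs]
    intro t ht
    by_cases hne : (K s).Nonempty
    · have : g t ∈ W := by
        have := (γ t).2
        simp [hg, Path.map]
        exact this
      have := Set.mem_iInter₂.1 this s hs
      simpa [hne] using this
    · exact absurd ⟨t, ht⟩ hne
  have : g ∈ ((↑) : Path x x → C(unitInterval, X)) ⁻¹' V := hgV
  rw [hVpre] at this
  have heq : (⟦g⟧ : Path.Homotopic.Quotient x x) = ⟦Path.refl x⟧ := this
  exact Quotient.exact heq
end

section
/- Let (X,x) be a pointed topological space and let f ∈ C_x(X) be a loop based at x. If X is locally path connected and semilocally simply-connected, then the singleton {[f]} is open in the topological fundamental group π₁^top(X,x); consequently π₁^top(X,x) is a discrete topological space. -/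
attribute [local instance] Path.Homotopic.setoid

open Set unitInterval CategoryTheory Topology

namespace SLSC
noncomputable section
variable {X : Type*} [TopologicalSpace X] {x y : X}

/-- A path as a morphism in the fundamental groupoid. -/
def toHom {u v : X} (p : Path u v) : FundamentalGroupoid.mk u ⟶ FundamentalGroupoid.mk v :=
  Quotient.mk (Path.Homotopic.setoid u v) p

lemma toHom_comp {u v w : X} (p : Path u v) (q : Path v w) :
    toHom p ≫ toHom q = toHom (p.trans q) :=
  (Path.Homotopic.Quotient.mk_trans p q).symm

lemma toHom_id (u : X) : toHom (Path.refl u) = 𝟙 (FundamentalGroupoid.mk u) := rfl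

lemma toHom_sound {u v : X} {p q : Path u v} (h : p.Homotopic q) : toHom p = toHom q :=
  Quotient.sound h

lemma toHom_exact {u v : X} {p q : Path u v} (h : toHom p = toHom q) : p.Homotopic q :=
  Quotient.exact h

lemma symm_comp_self {u v : X} (p : Path u v) :
    toHom p.symm ≫ toHom p = 𝟙 (FundamentalGroupoid.mk v) := by
  rw [toHom_comp, ← toHom_id]
  exact toHom_sound ⟨(Path.Homotopy.reflSymmTrans p).symm⟩

lemma self_comp_symm {u v : X} (p : Path u v) :
    toHom p ≫ toHom p.symm = 𝟙 (FundamentalGroupoid.mk u) := by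
  rw [toHom_comp, ← toHom_id]
  exact toHom_sound ⟨(Path.Homotopy.reflTransSymm p).symm⟩

lemma symm_comp_self_assoc {u v : X} (p : Path u v) {c : FundamentalGroupoid X}
    (f : FundamentalGroupoid.mk v ⟶ c) : toHom p.symm ≫ toHom p ≫ f = f := by
  rw [← Category.assoc, symm_comp_self, Category.id_comp]

lemma self_comp_symm_assoc {u v : X} (p : Path u v) {c : FundamentalGroupoid X}
    (f : FundamentalGroupoid.mk u ⟶ c) : toHom p ≫ toHom p.symm ≫ f = f := by
  rw [← Category.assoc, self_comp_symm, Category.id_comp]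

/-- Restriction of a path with range in `U` to a path in the subtype `U`. -/
def restrictTo {u v : X} (γ : Path u v) (U : Set X) (h : ∀ s, γ s ∈ U)
    (hu : u ∈ U) (hv : v ∈ U) : Path (⟨u, hu⟩ : U) (⟨v, hv⟩ : U) where
  toFun s := ⟨γ s, h s⟩
  continuous_toFun := γ.continuous.subtype_mk _
  source' := Subtype.ext γ.source
  target' := Subtype.ext γ.target

lemma restrictTo_map {u v : X} (γ : Path u v) (U : Set X) (h : ∀ s, γ s ∈ U)
    (hu : u ∈ U) (hv : v ∈ U) :
    (restrictTo γ U h hu hv).map continuous_subtype_val = γ := by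
  ext s
  rfl

/-- Every point of a locally path connected, semilocally simply connected space has an
open neighborhood in which any two paths with the same endpoints are homotopic (in the
ambient space). -/
lemma exists_good [LocallyPathConnectedSpace X] (hX : SemilocallySimplyConnected X) (z : X) :
    ∃ V : Set X, IsOpen V ∧ z ∈ V ∧
      ∀ {p q : X} (γ₁ γ₂ : Path p q), range γ₁ ⊆ V → range γ₂ ⊆ V → γ₁.Homotopic γ₂ := by
  obtain ⟨U, hUo, hzU, hU⟩ := hX z
  refine ⟨pathComponentIn U z, hUo.pathComponentIn z, mem_pathComponentIn_self hzU,
    fun {p q} γ₁ γ₂ h₁ h₂ => ?_⟩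
  set V := pathComponentIn U z with hV
  have hVU : V ⊆ U := pathComponentIn_subset
  have hVpc : IsPathConnected V := isPathConnected_pathComponentIn hzU
  have hp : p ∈ V := by
    have h0 : γ₁ 0 ∈ range γ₁ := mem_range_self 0
    have := h₁ h0
    rwa [γ₁.source] at this
  obtain ⟨α, hα⟩ : JoinedIn V z p := hVpc.joinedIn z (mem_pathComponentIn_self hzU) p hp
  have hαV : range α ⊆ V := range_subset_iff.2 hα
  set L : Path z z := α.trans ((γ₁.trans γ₂.symm).trans α.symm) with hL
  have hLU : ∀ s, L s ∈ U := by
    have hr : range L ⊆ U := by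
      rw [hL, Path.trans_range, Path.trans_range, Path.trans_range, Path.symm_range,
        Path.symm_range]
      exact union_subset (hαV.trans hVU) (union_subset
        (union_subset (h₁.trans hVU) (h₂.trans hVU)) (hαV.trans hVU))
    exact fun s => hr (mem_range_self s)
  have htriv : L.Homotopic (Path.refl z) := by
    have := hU (restrictTo L U hLU hzU hzU)
    rwa [restrictTo_map] at this
  have e : toHom α ≫ (toHom γ₁ ≫ toHom γ₂.symm) ≫ toHom α.symm = 𝟙 _ := by
    rw [toHom_comp γ₁ γ₂.symm, toHom_comp, toHom_comp, ← toHom_id]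
    exact toHom_sound htriv
  have e2 : toHom γ₁ ≫ toHom γ₂.symm = 𝟙 _ := by
    have h3 := congrArg (fun m => toHom α.symm ≫ m ≫ toHom α) e
    simp only [Category.assoc, Category.id_comp, Category.comp_id] at h3
    rw [symm_comp_self_assoc α, symm_comp_self α] at h3
    rw [Category.comp_id] at h3
    exact h3
  have e3 : toHom γ₁ = toHom γ₂ := by
    have h4 := congrArg (fun m => m ≫ toHom γ₂) e2
    simp only [Category.assoc, Category.id_comp] at h4
    rw [show toHom γ₂.symm ≫ toHom γ₂ = 𝟙 _ from symm_comp_self γ₂, Category.comp_id] at h4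
    exact h4
  exact toHom_exact e3
/-- If two paths are both of the form `γ.extend ∘ f` for a common path `γ`, with
agreeing endpoints of the parameter functions, then they are homotopic. -/
lemma homotopic_of_extend {a b : X} (γ : Path a b) {u v : X} (p q : Path u v)
    (f g : I → ℝ) (hf : Continuous f) (hg : Continuous g)
    (hp : ∀ s, p s = γ.extend (f s)) (hq : ∀ s, q s = γ.extend (g s))
    (h0 : f 0 = g 0) (h1 : f 1 = g 1) : p.Homotopic q := by
  refine ⟨⟨⟨⟨fun ts => γ.extend ((1 - (ts.1 : ℝ)) * f ts.2 + (ts.1 : ℝ) * g ts.2), ?_⟩,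
      ?_, ?_⟩, ?_⟩⟩
  · exact γ.continuous_extend.comp <| by fun_prop
  · intro s
    simp only [Icc.coe_zero]
    rw [show (1 - (0:ℝ)) * f s + 0 * g s = f s by ring]
    exact (hp s).symm
  · intro s
    simp only [Icc.coe_one]
    rw [show (1 - (1:ℝ)) * f s + 1 * g s = g s by ring]
    exact (hq s).symm
  · intro t s hs
    rcases hs with h | h
    · subst h
      show γ.extend _ = p 0
      rw [hp 0, h0, show (1 - (t:ℝ)) * g 0 + (t:ℝ) * g 0 = g 0 by ring]
    · simp only [mem_singleton_iff] at h
      subst h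
      show γ.extend _ = p 1
      rw [hp 1, h1, show (1 - (t:ℝ)) * g 1 + (t:ℝ) * g 1 = g 1 by ring]


/-- The segment of a path `p` between times `a ≤ b`, as a path from `p a` to `p b`. -/
def seg (p : Path x y) (a b : I) (hab : a ≤ b) : Path (p a) (p b) :=
  (p.truncate a b).cast
    (by rw [min_eq_left (Subtype.coe_le_coe.2 hab)]; exact (p.extend_extends' a).symm)
    (p.extend_extends' b).symm

/-- The segment of a path `p` from time `a` to time `1`, as a path from `p a` to `y`. -/
noncomputable def segTo1 (p : Path x y) (a : I) : Path (p a) y :=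
  (seg p a 1 le_one').cast rfl p.target.symm

lemma seg_apply (p : Path x y) (a b : I) (hab : a ≤ b) (s : I) :
    seg p a b hab s = p.extend (min (max (s : ℝ) a) b) := rfl

lemma segTo1_apply (p : Path x y) (a : I) (s : I) :
    segTo1 p a s = p.extend (min (max (s : ℝ) a) 1) := rfl

lemma range_seg (p : Path x y) (a b : I) (hab : a ≤ b) :
    range (seg p a b hab) ⊆ p '' (Icc a b) := by
  rintro _ ⟨s, rfl⟩
  rw [seg_apply]
  have hm : min (max (s : ℝ) a) b ∈ (I : Set ℝ) :=
    ⟨le_min (le_max_of_le_right a.2.1) b.2.1, min_le_of_right_le b.2.2⟩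
  rw [show p.extend (min (max (s : ℝ) a) b) = p ⟨_, hm⟩ from p.extend_extends' ⟨_, hm⟩]
  refine mem_image_of_mem p ⟨?_, ?_⟩
  · exact Subtype.mk_le_mk.2 (le_min (le_max_right _ _) (Subtype.coe_le_coe.2 hab))
  · exact Subtype.mk_le_mk.2 (min_le_right _ _)

lemma range_segTo1 (p : Path x y) (a : I) :
    range (segTo1 p a) ⊆ p '' (Icc a 1) := by
  have : range (segTo1 p a) = range (seg p a 1 le_one') := by
    unfold segTo1; rw [Path.cast_coe]
  rw [this]; exact range_seg p a 1 le_one'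

/-- Splitting off an initial segment, up to homotopy. -/
lemma segTo1_split (p : Path x y) (a c : I) (hac : a ≤ c) :
    (segTo1 p a).Homotopic ((seg p a c hac).trans (segTo1 p c)) := by
  have hc1 : (c : ℝ) ≤ 1 := c.2.2
  have ha0 : (0 : ℝ) ≤ a := a.2.1
  have hac' : (a : ℝ) ≤ c := hac
  refine homotopic_of_extend p _ _
    (fun s => min (max (s : ℝ) a) 1)
    (fun s => if (s : ℝ) ≤ 1 / 2 then min (max (2 * (s : ℝ)) a) c
      else min (max (2 * (s : ℝ) - 1) c) 1)
    (by fun_prop) ?_ (fun s => rfl) ?_ ?_ ?_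
  · apply Continuous.if_le (by fun_prop) (by fun_prop) (by fun_prop) continuous_const
    intro s hs
    rw [hs]
    rw [show (2:ℝ) * (1/2) = 1 by norm_num] at *
    rw [show (1:ℝ) - 1 = 0 by norm_num, max_eq_left a.2.2, min_eq_right hc1,
      max_eq_right c.2.1, min_eq_left hc1]
  · intro s
    rw [Path.trans_apply]
    split_ifs with h
    · rfl
    · rfl
  · have ha1 : (a:ℝ) ≤ 1 := a.2.2
    norm_num [ha0, hac', ha1]
  · simp only [Icc.coe_one]
    rw [if_neg (by norm_num : ¬(1:ℝ) ≤ 1/2), show (2:ℝ)*1-1 = 1 by norm_num,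
      max_eq_left a.2.2, max_eq_left hc1, min_self]


lemma segTo1_zero (p : Path x y) (a : I) (ha : a = 0) :
    segTo1 p a = p.cast (by rw [ha]; exact p.source) rfl := by
  ext s
  rw [segTo1_apply, Path.cast_coe, ha]
  rw [show ((0 : I) : ℝ) = 0 from rfl, max_eq_left s.2.1, min_eq_left s.2.2]
  exact p.extend_extends' s

lemma cancel_cast {w z u u' : X} (g h : Path w z) (e1 : u = w) (e1' : u' = w)
    (H : toHom (g.cast e1 rfl) = toHom ((Path.refl w).cast e1 e1') ≫ toHom (h.cast e1' rfl)) :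
    g.Homotopic h := by
  rw [toHom_comp] at H
  have H2 := toHom_exact H
  subst e1; subst e1'
  have h1 : ∀ {a b : X} (p : Path a b), p.cast rfl rfl = p := fun p => by ext s; rfl
  rw [h1, h1, h1] at H2
  exact H2.trans ⟨Path.Homotopy.reflTrans h⟩

/-- The key lemma: every path has an open neighborhood consisting of homotopic paths. -/
lemma key [LocallyPathConnectedSpace X] (hX : SemilocallySimplyConnected X)
    {x y : X} (g : Path x y) :
    ∃ N : Set (Path x y), IsOpen N ∧ g ∈ N ∧ ∀ h ∈ N, g.Homotopic h := by
  choose V hVo hVmem hVtriv using fun z : X => exists_good hX z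
  obtain ⟨t, ht0, htmono, ⟨m, htm⟩, hsub⟩ :=
    exists_monotone_Icc_subset_open_cover_unitInterval
      (c := fun s : I => g ⁻¹' V (g s))
      (fun s => (hVo _).preimage g.continuous)
      (fun s _ => mem_iUnion.2 ⟨s, hVmem (g s)⟩)
  choose i hi using hsub
  set Vn : ℕ → Set X := fun n => V (g (i n)) with hVn
  have hVno : ∀ n, IsOpen (Vn n) := fun n => hVo _
  have htriv : ∀ (n : ℕ) {p q : X} (γ₁ γ₂ : Path p q),
      range γ₁ ⊆ Vn n → range γ₂ ⊆ Vn n → γ₁.Homotopic γ₂ := fun n => hVtriv _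
  have hgmem : ∀ n, g (t n) ∈ Vn n := fun n => hi n ⟨le_rfl, htmono (Nat.le_succ n)⟩
  have hWex : ∀ n, ∃ W : Set X, W ∈ 𝓝 (g (t n)) ∧ IsPathConnected W ∧
      W ⊆ Vn (n - 1) ∩ Vn n := by
    intro n
    have h1 : g (t n) ∈ Vn (n - 1) :=
      hi (n - 1) ⟨htmono (Nat.sub_le n 1), htmono (by omega)⟩
    have hmem : Vn (n - 1) ∩ Vn n ∈ 𝓝 (g (t n)) :=
      ((hVno _).inter (hVno _)).mem_nhds ⟨h1, hgmem n⟩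
    rcases (path_connected_basis (g (t n))).mem_iff.mp hmem with ⟨W, ⟨hW1, hW2⟩, hW3⟩
    exact ⟨W, hW1, hW2, hW3⟩
  choose W hWnhds hWpc hWsub using hWex
  have hgW : ∀ n, g (t n) ∈ W n := fun n => mem_of_mem_nhds (hWnhds n)
  refine ⟨⋂ n ∈ Finset.range m, ({h : Path x y | MapsTo h (Icc (t n) (t (n + 1))) (Vn n)} ∩
      {h : Path x y | h (t n) ∈ interior (W n)}), ?_, ?_, ?_⟩
  · refine isOpen_biInter_finset fun n _ => IsOpen.inter ?_ ?_
    · exact (ContinuousMap.isOpen_setOf_mapsTo (isClosed_Icc.isCompact) (hVno n)).preimage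
        continuous_induced_dom
    · exact isOpen_interior.preimage (continuous_eval_const (t n))
  · refine mem_iInter₂.2 fun n _ => ⟨fun s hs => hi n hs, ?_⟩
    exact mem_interior_iff_mem_nhds.2 (hWnhds n)
  · intro h hmemN
    rw [mem_iInter₂] at hmemN
    have hMaps : ∀ n < m, MapsTo h (Icc (t n) (t (n + 1))) (Vn n) :=
      fun n hn => (hmemN n (Finset.mem_range.2 hn)).1
    have hWh : ∀ n < m, h (t n) ∈ W n :=
      fun n hn => interior_subset (hmemN n (Finset.mem_range.2 hn)).2
    have hβ : ∀ n, ∃ β : Path (g (t n)) (h (t n)), ∀ s, β s ∈ W n := by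
      intro n
      by_cases hn : n < m
      · exact (hWpc n).joinedIn _ (hgW n) _ (hWh n hn)
      · have h1 : h (t n) = g (t n) := by
          rw [htm n (le_of_not_gt hn), h.target, g.target]
        exact (hWpc n).joinedIn _ (hgW n) _ (h1 ▸ hgW n)
    choose β hβW using hβ
    have hyV : ∀ n, m ≤ n → y ∈ Vn n := by
      intro n hn
      have h1 : g (t n) ∈ Vn n := (hWsub n (hgW n)).2
      rwa [show g (t n) = y from by rw [htm n hn]; exact g.target] at h1
    have claim : ∀ k n, m ≤ n + k →
        toHom (segTo1 g (t n)) = toHom (β n) ≫ toHom (segTo1 h (t n)) := by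
      intro k
      induction k with
      | zero =>
        intro n hn
        rw [Nat.add_zero] at hn
        rw [toHom_comp]
        refine toHom_sound (htriv n _ _ ?_ ?_)
        · refine (range_segTo1 g (t n)).trans (image_subset_iff.2 fun s hs => ?_)
          exact hi n ⟨hs.1, by rw [htm (n + 1) (by omega)]; exact hs.2⟩
        · rw [Path.trans_range]
          refine union_subset ?_ ?_
          · exact (range_subset_iff.2 (hβW n)).trans ((hWsub n).trans inter_subset_right)
          · refine (range_segTo1 h (t n)).trans (image_subset_iff.2 fun s hs => ?_)
            have hs1 : s = 1 := le_antisymm hs.2 (by rw [← htm n hn]; exact hs.1)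
            rw [mem_preimage, hs1, h.target]
            exact hyV n hn
      | succ k IH =>
        intro n hn
        by_cases hnm : m ≤ n + k
        · exact IH n hnm
        · have hn_lt : n < m := by omega
          have hle : t n ≤ t (n + 1) := htmono (Nat.le_succ n)
          have hsplit_g : toHom (segTo1 g (t n)) =
              toHom (seg g (t n) (t (n + 1)) hle) ≫ toHom (segTo1 g (t (n + 1))) := by
            rw [toHom_comp]; exact toHom_sound (segTo1_split g _ _ hle)
          have hsplit_h : toHom (segTo1 h (t n)) =
              toHom (seg h (t n) (t (n + 1)) hle) ≫ toHom (segTo1 h (t (n + 1))) := by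
            rw [toHom_comp]; exact toHom_sound (segTo1_split h _ _ hle)
          have hgood : toHom (seg g (t n) (t (n + 1)) hle) =
              toHom ((β n).trans ((seg h (t n) (t (n + 1)) hle).trans (β (n + 1)).symm)) := by
            refine toHom_sound (htriv n _ _ ?_ ?_)
            · exact (range_seg g _ _ hle).trans (image_subset_iff.2 (hi n))
            · rw [Path.trans_range, Path.trans_range, Path.symm_range]
              refine union_subset ?_ (union_subset ?_ ?_)
              · exact (range_subset_iff.2 (hβW n)).trans ((hWsub n).trans inter_subset_right)
              · exact (range_seg h _ _ hle).trans
                  (image_subset_iff.2 fun s hs => hMaps n hn_lt hs)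
              · exact (range_subset_iff.2 (hβW (n + 1))).trans
                  ((hWsub (n + 1)).trans inter_subset_left)
          calc toHom (segTo1 g (t n))
              = toHom (seg g (t n) (t (n + 1)) hle) ≫ toHom (segTo1 g (t (n + 1))) := hsplit_g
            _ = toHom ((β n).trans ((seg h (t n) (t (n + 1)) hle).trans (β (n + 1)).symm)) ≫
                  (toHom (β (n + 1)) ≫ toHom (segTo1 h (t (n + 1)))) := by
                rw [hgood, IH (n + 1) (by omega)]
            _ = toHom (β n) ≫ toHom (seg h (t n) (t (n + 1)) hle) ≫
                  (toHom (β (n + 1)).symm ≫ toHom (β (n + 1)) ≫ toHom (segTo1 h (t (n + 1)))) := by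
                rw [← toHom_comp (β n), ← toHom_comp (seg h (t n) (t (n + 1)) hle)]
                simp only [Category.assoc]
            _ = toHom (β n) ≫ toHom (seg h (t n) (t (n + 1)) hle) ≫
                  toHom (segTo1 h (t (n + 1))) := by
                rw [symm_comp_self_assoc]
            _ = toHom (β n) ≫ toHom (segTo1 h (t n)) := by rw [← hsplit_h]
    have c0 := claim m 0 (by omega)
    have e1 : g (t 0) = x := by rw [ht0]; exact g.source
    have e1' : h (t 0) = x := by rw [ht0]; exact h.source
    have hβ0 : (β 0).Homotopic ((Path.refl x).cast e1 e1') := by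
      refine htriv 0 _ _ ((range_subset_iff.2 (hβW 0)).trans
        ((hWsub 0).trans inter_subset_right)) ?_
      rw [show range ((Path.refl x).cast e1 e1') = range (Path.refl x) from
        by rw [Path.cast_coe], Path.refl_range]
      refine singleton_subset_iff.2 ?_
      rw [← e1]
      exact (hWsub 0 (hgW 0)).2
    rw [segTo1_zero g (t 0) ht0, segTo1_zero h (t 0) ht0, toHom_sound hβ0] at c0
    exact cancel_cast g h e1 e1' c0

end
end SLSC

open Set

theorem isOpen_singleton_of_locPathConnected_of_semilocallySimplyConnected
    {X : Type*} [TopologicalSpace X] [LocallyPathConnectedSpace X]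
    (hX : SemilocallySimplyConnected X) (x : X) (f : Path x x) :
    IsOpen ({⟦f⟧} : Set (Path.Homotopic.Quotient x x)) ∧
      DiscreteTopology (Path.Homotopic.Quotient x x) := by
  have key' : ∀ f' : Path x x, IsOpen ({⟦f'⟧} : Set (Path.Homotopic.Quotient x x)) := by
    intro f'
    change IsOpen ({Quotient.mk' f'} : Set (Quotient (Path.Homotopic.setoid x x)))
    rw [← isQuotientMap_quotient_mk'.isOpen_preimage]
    refine isOpen_iff_forall_mem_open.mpr fun g hg => ?_
    obtain ⟨N, hNo, hgN, hN⟩ := SLSC.key hX g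
    refine ⟨N, fun h hh => ?_, hNo, hgN⟩
    simp only [mem_preimage, mem_singleton_iff] at hg ⊢
    rw [← hg]
    exact Quotient.sound (Path.Homotopic.symm (hN h hh))
  refine ⟨key' f, discreteTopology_iff_isOpen_singleton.mpr fun q => ?_⟩
  exact Quotient.inductionOn q key'
end

section
/- Let X be a path connected and locally path connected topological space. Then the topological fundamental group π₁^top(X,x) is discrete for some x ∈ X if and only if X is semilocally simply-connected. -/
attribute [local instance] Path.Homotopic.setoid

open Set unitInterval

namespace SLSCAux

variable {X : Type*} [TopologicalSpace X] {a b : X}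

noncomputable def psubL (γ : Path a b) {t : ℝ} (h0 : 0 ≤ t) : Path a (γ.extend t) :=
  (γ.truncate 0 t).cast (by rw [min_eq_left h0, γ.extend_zero]) rfl

noncomputable def psubR (γ : Path a b) {t : ℝ} (h1 : t ≤ 1) : Path (γ.extend t) b :=
  (γ.truncate t 1).cast (by rw [min_eq_left h1]) (by rw [γ.extend_one])

theorem truncate_coe (γ : Path a b) (s t : ℝ) :
    ⇑(γ.truncate s t) = fun r : I => γ.extend (min (max (r : ℝ) s) t) := rfl

theorem psubL_apply (γ : Path a b) {t : ℝ} (h0 : 0 ≤ t) (r : I) :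
    psubL γ h0 r = γ.extend (min (max (r : ℝ) 0) t) := rfl

theorem psubR_apply (γ : Path a b) {t : ℝ} (h1 : t ≤ 1) (r : I) :
    psubR γ h1 r = γ.extend (min (max (r : ℝ) t) 1) := rfl

theorem truncateOfLE_apply (γ : Path a b) {s t : ℝ} (h : s ≤ t) (r : I) :
    γ.truncateOfLE h r = γ.extend (min (max (r : ℝ) s) t) := rfl

section reparam

variable {s t : ℝ}

/-- The standard reparametrization used to split a path at an intermediate time. -/
noncomputable def splitFun (s : ℝ) : I → ℝ := fun r =>
  if (r : ℝ) ≤ 1 / 2 then min (2 * (r : ℝ)) s else max (2 * (r : ℝ) - 1) s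

theorem splitFun_mem (h0 : 0 ≤ s) (h1 : s ≤ 1) (r : I) : splitFun s r ∈ I := by
  rw [splitFun]
  split_ifs with h
  · exact ⟨le_min (mul_nonneg zero_le_two r.2.1) h0, le_trans (min_le_right _ _) h1⟩
  · exact ⟨le_trans h0 (le_max_right _ _), max_le (by have := r.2.2; linarith) h1⟩

noncomputable def splitMap (s : ℝ) (h0 : 0 ≤ s) (h1 : s ≤ 1) : I → I := fun r =>
  ⟨splitFun s r, splitFun_mem h0 h1 r⟩

theorem splitMap_coe (h0 : 0 ≤ s) (h1 : s ≤ 1) (r : I) :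
    (splitMap s h0 h1 r : ℝ) =
      if (r : ℝ) ≤ 1 / 2 then min (2 * (r : ℝ)) s else max (2 * (r : ℝ) - 1) s := rfl

theorem splitFun_continuous (h0 : 0 ≤ s) (h1 : s ≤ 1) : Continuous (splitFun s) := by
  apply Continuous.if_le
  · exact (continuous_const.mul continuous_subtype_val).min continuous_const
  · exact ((continuous_const.mul continuous_subtype_val).sub continuous_const).max
      continuous_const
  · exact continuous_subtype_val
  · exact continuous_const
  · intro r hr
    rw [hr]
    norm_num [min_eq_right h1, max_eq_right h0]

theorem splitMap_continuous (h0 : 0 ≤ s) (h1 : s ≤ 1) : Continuous (splitMap s h0 h1) :=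
  (splitFun_continuous h0 h1).subtype_mk _

theorem splitMap_zero (h0 : 0 ≤ s) (h1 : s ≤ 1) : splitMap s h0 h1 0 = 0 := by
  ext
  rw [splitMap_coe]
  norm_num [min_eq_left h0]

theorem splitMap_one (h0 : 0 ≤ s) (h1 : s ≤ 1) : splitMap s h0 h1 1 = 1 := by
  ext
  rw [splitMap_coe]
  norm_num [max_eq_left h1]

/-- Splitting an initial segment of a path at an intermediate time `s ≤ t`. -/
theorem psubL_split (γ : Path a b) (h0 : 0 ≤ s) (hst : s ≤ t) (h1 : t ≤ 1) :
    (psubL γ (h0.trans hst)).Homotopic ((psubL γ h0).trans (γ.truncateOfLE hst)) := by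
  have hs1 : s ≤ 1 := hst.trans h1
  have heq : (psubL γ (h0.trans hst)).reparam (splitMap s h0 hs1)
      (splitMap_continuous h0 hs1) (splitMap_zero h0 hs1) (splitMap_one h0 hs1) =
      (psubL γ h0).trans (γ.truncateOfLE hst) := by
    ext r
    show (psubL γ (h0.trans hst)) (splitMap s h0 hs1 r) = _
    rw [Path.trans_apply]
    have hr0 : (0:ℝ) ≤ r := r.2.1
    have hr1 : (r:ℝ) ≤ 1 := r.2.2
    split_ifs with h
    · rw [psubL_apply, psubL_apply]
      congr 1
      rw [splitMap_coe, if_pos h]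
      have hmin0 : (0:ℝ) ≤ min (2 * (r:ℝ)) s := le_min (by positivity) h0
      rw [max_eq_left hmin0, min_eq_left (le_trans (min_le_right _ _) hst),
        max_eq_left (by positivity : (0:ℝ) ≤ 2 * (r:ℝ))]
    · rw [psubL_apply, truncateOfLE_apply]
      congr 1
      rw [splitMap_coe, if_neg h]
      rw [max_eq_left (le_trans h0 (le_max_right _ _))]
  exact ⟨(Path.Homotopy.reparam _ _ (splitMap_continuous h0 hs1) (splitMap_zero h0 hs1)
    (splitMap_one h0 hs1)).cast rfl heq⟩

/-- Splitting a whole path at time `s`. -/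
theorem split_whole (γ : Path a b) (h0 : 0 ≤ s) (h1 : s ≤ 1) :
    γ.Homotopic ((psubL γ h0).trans (psubR γ h1)) := by
  have heq : γ.reparam (splitMap s h0 h1)
      (splitMap_continuous h0 h1) (splitMap_zero h0 h1) (splitMap_one h0 h1) =
      (psubL γ h0).trans (psubR γ h1) := by
    ext r
    show γ (splitMap s h0 h1 r) = _
    rw [Path.trans_apply]
    have hr0 : (0:ℝ) ≤ r := r.2.1
    have hr1 : (r:ℝ) ≤ 1 := r.2.2
    split_ifs with h
    · rw [psubL_apply]
      have hmin0 : (0:ℝ) ≤ min (2 * (r:ℝ)) s := le_min (by positivity) h0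
      rw [max_eq_left (by positivity : (0:ℝ) ≤ 2 * (r:ℝ)),
        γ.extend_apply ⟨hmin0, le_trans (min_le_right _ _) h1⟩]
      congr 1
      ext
      rw [splitMap_coe, if_pos h]
    · rw [psubR_apply]
      have hle1 : max (2 * (r:ℝ) - 1) s ≤ 1 := max_le (by linarith) h1
      rw [min_eq_left hle1,
        γ.extend_apply ⟨le_trans h0 (le_max_right _ _), hle1⟩]
      congr 1
      ext
      rw [splitMap_coe, if_neg h]
  exact ⟨(Path.Homotopy.reparam _ _ (splitMap_continuous h0 h1) (splitMap_zero h0 h1)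
    (splitMap_one h0 h1)).cast rfl heq⟩

end reparam

section ranges

theorem truncate_range_subset {γ : Path a b} {s t : ℝ} {V : Set X}
    (h0 : 0 ≤ s) (h1 : t ≤ 1) (hst : s ≤ t)
    (h : ∀ r : I, s ≤ (r : ℝ) → (r : ℝ) ≤ t → γ r ∈ V) :
    range ⇑(γ.truncate s t) ⊆ V := by
  rintro _ ⟨r, rfl⟩
  have hc1 : s ≤ min (max (r : ℝ) s) t := le_min (le_max_right _ _) hst
  have hc2 : min (max (r : ℝ) s) t ≤ t := min_le_right _ _
  have hmem : min (max (r : ℝ) s) t ∈ I := ⟨le_trans h0 hc1, le_trans hc2 h1⟩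
  show γ.extend (min (max (r : ℝ) s) t) ∈ V
  rw [γ.extend_apply hmem]
  exact h _ hc1 hc2

theorem psubL_range_subset {γ : Path a b} {t : ℝ} {V : Set X}
    (h0 : 0 ≤ t) (h1 : t ≤ 1)
    (h : ∀ r : I, (r : ℝ) ≤ t → γ r ∈ V) :
    range ⇑(psubL γ h0) ⊆ V := by
  rw [psubL, Path.cast_coe]
  exact truncate_range_subset le_rfl h1 h0 fun r _ hr2 => h r hr2

theorem psubR_range_subset {γ : Path a b} {t : ℝ} {V : Set X}
    (h0 : 0 ≤ t) (h1 : t ≤ 1)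
    (h : ∀ r : I, t ≤ (r : ℝ) → γ r ∈ V) :
    range ⇑(psubR γ h1) ⊆ V := by
  rw [psubR, Path.cast_coe]
  exact truncate_range_subset h0 le_rfl h1 fun r hr1 _ => h r hr1

theorem truncateOfLE_range_subset {γ : Path a b} {s t : ℝ} {V : Set X}
    (h0 : 0 ≤ s) (h1 : t ≤ 1) (hst : s ≤ t)
    (h : ∀ r : I, s ≤ (r : ℝ) → (r : ℝ) ≤ t → γ r ∈ V) :
    range ⇑(γ.truncateOfLE hst) ⊆ V := by
  rw [Path.truncateOfLE, Path.cast_coe]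
  exact truncate_range_subset h0 h1 hst h

end ranges

section groupoid

open CategoryTheory

theorem quot_conj {z c : X} (p : Path z c) (γ : Path c c)
    (h : ((p.trans γ).trans p.symm).Homotopic (Path.refl z)) :
    γ.Homotopic (Path.refl c) := by
  let P : (⟨z⟩ : FundamentalGroupoid X) ⟶ ⟨c⟩ := ⟦p⟧
  let G : (⟨c⟩ : FundamentalGroupoid X) ⟶ ⟨c⟩ := ⟦γ⟧
  have h2 : (P ≫ G) ≫ Groupoid.inv P = 𝟙 (⟨z⟩ : FundamentalGroupoid X) := Quotient.sound h
  have h3 : G = 𝟙 (⟨c⟩ : FundamentalGroupoid X) := by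
    have h4 := congrArg (fun q => Groupoid.inv P ≫ q ≫ P) h2
    simpa using h4
  exact Quotient.exact h3

theorem quot_cancel {w x y z : X} (gseg : Path w y) (α : Path w x) (fseg : Path x z)
    (β : Path y z)
    (h : (gseg.symm.trans (α.trans (fseg.trans β.symm))).Homotopic (Path.refl y)) :
    (⟦α.trans fseg⟧ : Path.Homotopic.Quotient w z) = ⟦gseg.trans β⟧ := by
  let A : (⟨w⟩ : FundamentalGroupoid X) ⟶ ⟨x⟩ := ⟦α⟧
  let F : (⟨x⟩ : FundamentalGroupoid X) ⟶ ⟨z⟩ := ⟦fseg⟧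
  let Gs : (⟨w⟩ : FundamentalGroupoid X) ⟶ ⟨y⟩ := ⟦gseg⟧
  let B : (⟨y⟩ : FundamentalGroupoid X) ⟶ ⟨z⟩ := ⟦β⟧
  have h2 : Groupoid.inv Gs ≫ A ≫ F ≫ Groupoid.inv B = 𝟙 (⟨y⟩ : FundamentalGroupoid X) :=
    Quotient.sound h
  have h3 : A ≫ F = Gs ≫ B := by
    have h4 := congrArg (fun q => Gs ≫ q ≫ B) h2
    simpa using h4
  exact h3

noncomputable abbrev qcomp {w x y : X} (P : Path.Homotopic.Quotient w x)
    (Q : Path.Homotopic.Quotient x y) : Path.Homotopic.Quotient w y :=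
  Path.Homotopic.Quotient.trans P Q

theorem qcomp_assoc {w x y z : X} (P : Path.Homotopic.Quotient w x)
    (Q : Path.Homotopic.Quotient x y) (R : Path.Homotopic.Quotient y z) :
    qcomp (qcomp P Q) R = qcomp P (qcomp Q R) :=
  @Category.assoc (FundamentalGroupoid X) _ ⟨w⟩ ⟨x⟩ ⟨y⟩ ⟨z⟩ P Q R

end groupoid

section lemB

variable (hS : SemilocallySimplyConnected X)

/-- Under semilocal simple connectivity, every point has a path-connected open
neighborhood `V` such that every loop contained in `V` is null-homotopic in `X`. -/
theorem good_nbhd [LocallyPathConnectedSpace X] (hS : SemilocallySimplyConnected X) (z : X) :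
    ∃ V : Set X, IsOpen V ∧ z ∈ V ∧ IsPathConnected V ∧
      ∀ (c : X) (γ : Path c c), range ⇑γ ⊆ V → γ.Homotopic (Path.refl c) := by
  obtain ⟨U, hU, hz, hloop⟩ := hS z
  refine ⟨pathComponentIn U z, hU.pathComponentIn z, mem_pathComponentIn_self hz,
    isPathConnected_pathComponentIn hz, ?_⟩
  intro c γ hγ
  have hc : c ∈ pathComponentIn U z := by
    have := hγ (mem_range_self 0)
    rwa [γ.source] at this
  have hjoin : JoinedIn U z c := hc
  let p : Path z c := hjoin.somePath
  set δ : Path z z := (p.trans γ).trans p.symm with hδ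
  have hδrange : ∀ s : I, δ s ∈ U := by
    intro s
    have : δ s ∈ range ⇑δ := mem_range_self s
    rw [hδ] at this
    rw [Path.trans_range, Path.trans_range, Path.symm_range] at this
    rcases this with (h | h) | h
    · obtain ⟨r, hr⟩ := h; rw [← hr]; exact hjoin.somePath_mem r
    · exact pathComponentIn_subset (hγ h)
    · obtain ⟨r, hr⟩ := h; rw [← hr]; exact hjoin.somePath_mem r
  let δ' : Path (⟨z, hz⟩ : U) (⟨z, hz⟩ : U) :=
    { toFun := fun s => ⟨δ s, hδrange s⟩
      continuous_toFun := δ.continuous.subtype_mk _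
      source' := Subtype.ext δ.source
      target' := Subtype.ext δ.target }
  have hmap : δ'.map continuous_subtype_val = δ := by
    ext s
    rfl
  have hnull := hloop δ'
  rw [hmap] at hnull
  exact quot_conj p γ hnull

end lemB

section main

variable [LocallyPathConnectedSpace X]

theorem path_isOpen_mapsTo {K : Set I} (hK : IsCompact K) {U : Set X} (hU : IsOpen U) :
    IsOpen {f : Path a b | MapsTo ⇑f K U} := by
  have heq : {f : Path a b | MapsTo ⇑f K U} =
      (fun f : Path a b => f.toContinuousMap) ⁻¹' {q : C(I, X) | MapsTo ⇑q K U} := rfl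
  rw [heq]
  exact (ContinuousMap.isOpen_setOf_mapsTo hK hU).preimage continuous_induced_dom

/-- The key lemma: under semilocal simple connectivity (and local path-connectivity),
every homotopy class of paths is open in the compact-open topology. -/
theorem open_class (hS : SemilocallySimplyConnected X) {a b : X} (g : Path a b) :
    ∃ N : Set (Path a b), IsOpen N ∧ g ∈ N ∧ ∀ f ∈ N, f.Homotopic g := by
  classical
  choose V hVopen hVmem hVpc hVnull using good_nbhd hS
  obtain ⟨t, ht0, htmono, ⟨m0, htm0⟩, hsub⟩ :=
    exists_monotone_Icc_subset_open_cover_unitInterval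
      (c := fun z : X => ⇑g ⁻¹' V z)
      (fun z => (hVopen z).preimage g.continuous)
      (fun r _ => mem_iUnion.mpr ⟨g r, hVmem (g r)⟩)
  choose z hz using hsub
  set M := m0 + 1 with hMdef
  have htM : ∀ n, M ≤ n → t n = 1 := fun n hn => htm0 n (le_trans (Nat.le_succ m0) hn)
  have hM0 : 0 < M := Nat.succ_pos _
  have ht0' : ((t 0 : I) : ℝ) = 0 := by rw [ht0]; rfl
  set V' : ℕ → Set X := fun n => V (z n) with hV'def
  have gmem : ∀ n, ∀ r : I, ((t n : I) : ℝ) ≤ (r : ℝ) → (r : ℝ) ≤ ((t (n+1) : I) : ℝ) →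
      g r ∈ V' n := by
    intro n r h1 h2
    exact hz n ⟨Subtype.coe_le_coe.mp h1, Subtype.coe_le_coe.mp h2⟩
  set W : ℕ → Set X := fun i => pathComponentIn (V' i ∩ V' (i+1)) (g (t (i+1))) with hWdef
  have hgmemVV : ∀ i, g (t (i+1)) ∈ V' i ∩ V' (i+1) := by
    intro i
    constructor
    · exact gmem i (t (i+1)) (htmono (Nat.le_succ i)) le_rfl
    · exact gmem (i+1) (t (i+1)) le_rfl (htmono (Nat.le_succ (i+1)))
  have hWopen : ∀ i, IsOpen (W i) := fun i =>
    ((hVopen (z i)).inter (hVopen (z (i+1)))).pathComponentIn _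
  have hWpc : ∀ i, IsPathConnected (W i) := fun i =>
    isPathConnected_pathComponentIn (hgmemVV i)
  have hgmemW : ∀ i, g (t (i+1)) ∈ W i := fun i => mem_pathComponentIn_self (hgmemVV i)
  set W'' : ℕ → Set X := fun n => if n + 1 < M then W n else univ with hW''def
  set N : Set (Path a b) :=
    (⋂ n : Fin M, {f : Path a b | MapsTo ⇑f (Icc (t n) (t ((n : ℕ)+1))) (V' n)}) ∩
      ⋂ n : Fin M, {f : Path a b | f (t ((n : ℕ)+1)) ∈ W'' n} with hNdef
  have hKcompact : ∀ n : ℕ, IsCompact (Icc (t n) (t (n+1))) := fun n =>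
    isClosed_Icc.isCompact
  refine ⟨N, ?_, ?_, ?_⟩
  · apply IsOpen.inter
    · exact isOpen_iInter_of_finite fun n => path_isOpen_mapsTo (hKcompact n) (hVopen _)
    · apply isOpen_iInter_of_finite
      intro n
      have : {f : Path a b | f (t ((n : ℕ)+1)) ∈ W'' n} =
          {f : Path a b | MapsTo ⇑f {t ((n : ℕ)+1)} (W'' n)} := by
        ext f; simp [MapsTo]
      rw [this]
      apply path_isOpen_mapsTo isCompact_singleton
      rw [hW''def]
      dsimp only
      split_ifs with h
      · exact hWopen n
      · exact isOpen_univ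
  · constructor
    · refine mem_iInter.mpr fun n => ?_
      intro r hr
      exact gmem n r (Subtype.coe_le_coe.mpr hr.1) (Subtype.coe_le_coe.mpr hr.2)
    · refine mem_iInter.mpr fun n => ?_
      show g (t ((n : ℕ)+1)) ∈ W'' n
      rw [hW''def]
      dsimp only
      split_ifs with h
      · exact hgmemW n
      · exact mem_univ _
  · intro f hf
    have hfV : ∀ n, n < M → ∀ r : I, ((t n : I) : ℝ) ≤ (r : ℝ) →
        (r : ℝ) ≤ ((t (n+1) : I) : ℝ) → f r ∈ V' n := by
      intro n hn r h1 h2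
      exact mem_iInter.mp hf.1 ⟨n, hn⟩ ⟨Subtype.coe_le_coe.mp h1, Subtype.coe_le_coe.mp h2⟩
    have hfW : ∀ n, n + 1 < M → f (t (n+1)) ∈ W n := by
      intro n hn
      have := mem_iInter.mp hf.2 ⟨n, Nat.lt_of_succ_lt hn⟩
      rw [hW''def] at this
      simp only [mem_setOf_eq] at this
      rwa [if_pos hn] at this
    -- the inductive claim
    have key : ∀ i, i < M → ∃ α : Path (g.extend ((t i : I) : ℝ)) (f.extend ((t i : I) : ℝ)),
        range ⇑α ⊆ V' i ∧
          (⟦psubL f (t i).2.1⟧ : Path.Homotopic.Quotient a (f.extend ((t i : I) : ℝ))) =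
            ⟦(psubL g (t i).2.1).trans α⟧ := by
      intro i
      induction i with
      | zero =>
        intro h0M
        have e0g : g.extend ((t 0 : I) : ℝ) = a := by rw [ht0']; exact g.extend_zero
        have e0f : f.extend ((t 0 : I) : ℝ) = a := by rw [ht0']; exact f.extend_zero
        refine ⟨(Path.refl a).cast e0g e0f, ?_, ?_⟩
        · rw [Path.cast_coe, Path.refl_range]
          have ha : g (0 : I) ∈ V' 0 := by
            exact gmem 0 0 (by rw [ht0']; exact (0:I).2.1) (t 1).2.1
          rw [g.source] at ha
          exact singleton_subset_iff.mpr ha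
        · have hval : ∀ γ : Path a b, ∀ r : I, psubL γ (t 0).2.1 r = a := by
            intro γ r
            rw [psubL_apply]
            rw [ht0', min_eq_right (le_max_right _ _), γ.extend_zero]
          have hpatheq : psubL f (t 0).2.1 = (psubL g (t 0).2.1).trans ((Path.refl a).cast e0g e0f) := by
            ext r
            rw [Path.trans_apply]
            split_ifs with h
            · rw [hval f, hval g]
            · have hca : ∀ s : I, ((Path.refl a).cast e0g e0f) s = a := fun s =>
                congrFun (Path.cast_coe _ e0g e0f) s
              rw [hval f, hca]
          rw [hpatheq]
      | succ i ih =>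
        intro hsucc
        have hi : i < M := Nat.lt_of_succ_lt hsucc
        obtain ⟨α, hαr, hαe⟩ := ih hi
        have hle : ((t i : I) : ℝ) ≤ ((t (i+1) : I) : ℝ) :=
          Subtype.coe_le_coe.mpr (htmono (Nat.le_succ i))
        set f_i : Path (f.extend ((t i : I) : ℝ)) (f.extend ((t (i+1) : I) : ℝ)) :=
          f.truncateOfLE hle with hfidef
        set g_i : Path (g.extend ((t i : I) : ℝ)) (g.extend ((t (i+1) : I) : ℝ)) :=
          g.truncateOfLE hle with hgidef
        have hrange_fi : range ⇑f_i ⊆ V' i :=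
          truncateOfLE_range_subset (t i).2.1 (t (i+1)).2.2 hle (hfV i hi)
        have hrange_gi : range ⇑g_i ⊆ V' i :=
          truncateOfLE_range_subset (t i).2.1 (t (i+1)).2.2 hle (fun r h1 h2 => gmem i r h1 h2)
        have joined : JoinedIn (W i) (g (t (i+1))) (f (t (i+1))) :=
          (hWpc i).joinedIn _ (hgmemW i) _ (hfW i hsucc)
        set β : Path (g.extend ((t (i+1) : I) : ℝ)) (f.extend ((t (i+1) : I) : ℝ)) :=
          joined.somePath.cast (g.extend_extends' (t (i+1))) (f.extend_extends' (t (i+1)))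
          with hβdef
        have hβrange : range ⇑β ⊆ W i := by
          rw [hβdef, Path.cast_coe]
          rintro _ ⟨r, rfl⟩
          exact joined.somePath_mem r
        have hβV1 : range ⇑β ⊆ V' i :=
          hβrange.trans (pathComponentIn_subset.trans inter_subset_left)
        have hβV2 : range ⇑β ⊆ V' (i+1) :=
          hβrange.trans (pathComponentIn_subset.trans inter_subset_right)
        set L : Path (g.extend ((t (i+1) : I) : ℝ)) (g.extend ((t (i+1) : I) : ℝ)) :=
          g_i.symm.trans (α.trans (f_i.trans β.symm)) with hLdef
        have hLrange : range ⇑L ⊆ V' i := by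
          rw [hLdef, Path.trans_range, Path.trans_range, Path.trans_range, Path.symm_range,
            Path.symm_range]
          exact union_subset hrange_gi (union_subset hαr (union_subset hrange_fi hβV1))
        have hLnull := hVnull (z i) _ L hLrange
        have hcan := quot_cancel g_i α f_i β hLnull
        refine ⟨β, hβV2, ?_⟩
        calc (Path.Homotopic.Quotient.mk (psubL f (t (i+1)).2.1) : Path.Homotopic.Quotient a (f.extend ((t (i+1) : I) : ℝ)))
            = Path.Homotopic.Quotient.mk ((psubL f (t i).2.1).trans f_i) :=
              Quotient.sound (psubL_split f (t i).2.1 hle (t (i+1)).2.2)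
          _ = qcomp (⟦psubL f (t i).2.1⟧ : Path.Homotopic.Quotient a _) ⟦f_i⟧ := rfl
          _ = qcomp (⟦(psubL g (t i).2.1).trans α⟧ : Path.Homotopic.Quotient a _) ⟦f_i⟧ := by
              rw [hαe]
          _ = qcomp (qcomp (⟦psubL g (t i).2.1⟧ : Path.Homotopic.Quotient a _) ⟦α⟧) ⟦f_i⟧ :=
              rfl
          _ = qcomp (⟦psubL g (t i).2.1⟧ : Path.Homotopic.Quotient a _) (qcomp ⟦α⟧ ⟦f_i⟧) :=
              qcomp_assoc _ _ _
          _ = qcomp (⟦psubL g (t i).2.1⟧ : Path.Homotopic.Quotient a _) ⟦α.trans f_i⟧ := rfl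
          _ = qcomp (⟦psubL g (t i).2.1⟧ : Path.Homotopic.Quotient a _) ⟦g_i.trans β⟧ := by
              rw [hcan]
          _ = qcomp (⟦psubL g (t i).2.1⟧ : Path.Homotopic.Quotient a _) (qcomp ⟦g_i⟧ ⟦β⟧) := rfl
          _ = qcomp (qcomp (⟦psubL g (t i).2.1⟧ : Path.Homotopic.Quotient a _) ⟦g_i⟧) ⟦β⟧ :=
              (qcomp_assoc _ _ _).symm
          _ = qcomp (⟦(psubL g (t i).2.1).trans g_i⟧ : Path.Homotopic.Quotient a _) ⟦β⟧ := rfl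
          _ = qcomp (⟦psubL g (t (i+1)).2.1⟧ : Path.Homotopic.Quotient a _) ⟦β⟧ := by
              rw [← Quotient.sound (psubL_split g (t i).2.1 hle (t (i+1)).2.2)]
          _ = Path.Homotopic.Quotient.mk ((psubL g (t (i+1)).2.1).trans β) := rfl
    -- conclude
    set i := M - 1 with hidef
    have hi : i < M := Nat.sub_lt hM0 Nat.one_pos
    have hisucc : i + 1 = M := Nat.succ_pred_eq_of_pos hM0
    obtain ⟨α, hαr, hαe⟩ := key i hi
    have htop : ((t (i+1) : I) : ℝ) = 1 := by rw [htM (i+1) (le_of_eq hisucc.symm)]; rfl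
    have hle1 : ((t i : I) : ℝ) ≤ 1 := (t i).2.2
    set f_last : Path (f.extend ((t i : I) : ℝ)) b := psubR f hle1 with hfldef
    set g_last : Path (g.extend ((t i : I) : ℝ)) b := psubR g hle1 with hgldef
    have hrange_fl : range ⇑f_last ⊆ V' i :=
      psubR_range_subset (t i).2.1 hle1 (fun r hr =>
        hfV i hi r hr (by rw [htop]; exact r.2.2))
    have hrange_gl : range ⇑g_last ⊆ V' i :=
      psubR_range_subset (t i).2.1 hle1 (fun r hr =>
        gmem i r hr (by rw [htop]; exact r.2.2))
    have hb : b ∈ V' i := by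
      have := gmem i 1 (by exact (t i).2.2) (by rw [htop]; exact (1:I).2.2)
      rwa [g.target] at this
    set L : Path b b := g_last.symm.trans (α.trans (f_last.trans (Path.refl b).symm)) with hLdef
    have hLrange : range ⇑L ⊆ V' i := by
      rw [hLdef, Path.trans_range, Path.trans_range, Path.trans_range, Path.symm_range,
        Path.symm_range, Path.refl_range]
      exact union_subset hrange_gl (union_subset hαr
        (union_subset hrange_fl (singleton_subset_iff.mpr hb)))
    have hLnull := hVnull (z i) _ L hLrange
    have hcan := quot_cancel g_last α f_last (Path.refl b) hLnull
    have hfg : (⟦f⟧ : Path.Homotopic.Quotient a b) = ⟦g⟧ :=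
      calc (Path.Homotopic.Quotient.mk f : Path.Homotopic.Quotient a b)
          = Path.Homotopic.Quotient.mk ((psubL f (t i).2.1).trans f_last) :=
            Quotient.sound (split_whole f (t i).2.1 hle1)
        _ = qcomp (⟦psubL f (t i).2.1⟧ : Path.Homotopic.Quotient a _) ⟦f_last⟧ := rfl
        _ = qcomp (⟦(psubL g (t i).2.1).trans α⟧ : Path.Homotopic.Quotient a _) ⟦f_last⟧ := by
            rw [hαe]
        _ = qcomp (qcomp (⟦psubL g (t i).2.1⟧ : Path.Homotopic.Quotient a _) ⟦α⟧) ⟦f_last⟧ :=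
            rfl
        _ = qcomp (⟦psubL g (t i).2.1⟧ : Path.Homotopic.Quotient a _) (qcomp ⟦α⟧ ⟦f_last⟧) :=
            qcomp_assoc _ _ _
        _ = qcomp (⟦psubL g (t i).2.1⟧ : Path.Homotopic.Quotient a _) ⟦α.trans f_last⟧ := rfl
        _ = qcomp (⟦psubL g (t i).2.1⟧ : Path.Homotopic.Quotient a _)
              ⟦g_last.trans (Path.refl b)⟧ := by rw [hcan]
        _ = qcomp (⟦psubL g (t i).2.1⟧ : Path.Homotopic.Quotient a _) (qcomp ⟦g_last⟧
              ⟦Path.refl b⟧) := rfl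
        _ = qcomp (qcomp (⟦psubL g (t i).2.1⟧ : Path.Homotopic.Quotient a _) ⟦g_last⟧)
              ⟦Path.refl b⟧ := (qcomp_assoc _ _ _).symm
        _ = qcomp (⟦(psubL g (t i).2.1).trans g_last⟧ : Path.Homotopic.Quotient a b)
              ⟦Path.refl b⟧ := rfl
        _ = qcomp (⟦g⟧ : Path.Homotopic.Quotient a b) ⟦Path.refl b⟧ := by
            rw [← Quotient.sound (split_whole g (t i).2.1 hle1)]
        _ = Path.Homotopic.Quotient.mk (g.trans (Path.refl b)) := rfl
        _ = Path.Homotopic.Quotient.mk g := Quotient.sound ⟨Path.Homotopy.transRefl g⟩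
    exact Quotient.exact hfg

end main

end SLSCAux

open SLSCAux Set unitInterval

theorem exists_discrete_iff_semilocally_simply_connected
    (X : Type*) [TopologicalSpace X] [PathConnectedSpace X] [LocallyPathConnectedSpace X] :
    (∃ x : X, DiscreteTopology (Path.Homotopic.Quotient x x)) ↔
      SemilocallySimplyConnected X := by
  constructor
  · rintro ⟨x₀, hd⟩ y
    classical
    let p : Path x₀ y := (PathConnectedSpace.joined x₀ y).somePath
    have hΦc : Continuous (fun γ : Path y y => (p.trans γ).trans p.symm) := by
      have h1 : Continuous fun γ : Path y y => p.trans γ :=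
        Path.continuous_trans.comp (continuous_const.prodMk continuous_id)
      exact Path.continuous_trans.comp (h1.prodMk continuous_const)
    have hopen0 : IsOpen {δ : Path x₀ x₀ |
        (⟦δ⟧ : Path.Homotopic.Quotient x₀ x₀) = ⟦Path.refl x₀⟧} := by
      have h1 : IsOpen ({⟦Path.refl x₀⟧} : Set (Path.Homotopic.Quotient x₀ x₀)) :=
        isOpen_discrete _
      exact h1.preimage continuous_quotient_mk'
    set S : Set (Path y y) :=
      (fun γ : Path y y => (p.trans γ).trans p.symm) ⁻¹'
        {δ : Path x₀ x₀ | (⟦δ⟧ : Path.Homotopic.Quotient x₀ x₀) = ⟦Path.refl x₀⟧} with hSdef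
    have hSopen : IsOpen S := hopen0.preimage hΦc
    have hreflS : Path.refl y ∈ S := by
      show (⟦(p.trans (Path.refl y)).trans p.symm⟧ : Path.Homotopic.Quotient x₀ x₀) =
        ⟦Path.refl x₀⟧
      have h1 : (p.trans (Path.refl y)).Homotopic p := ⟨Path.Homotopy.transRefl p⟩
      have h2 := Path.Homotopic.hcomp h1 (Path.Homotopic.refl p.symm)
      have h3 : (p.trans p.symm).Homotopic (Path.refl x₀) :=
        ⟨(Path.Homotopy.reflTransSymm p).symm⟩
      exact Quotient.sound (h2.trans h3)
    obtain ⟨T, hTopen, hTpre⟩ := isOpen_induced_iff.mp hSopen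
    rw [← hTpre] at hreflS
    have hbasis := TopologicalSpace.isTopologicalBasis_of_subbasis
      (ContinuousMap.compactOpen_eq (X := I) (Y := X))
    obtain ⟨v, hvB, hv_mem, hvsub⟩ := hbasis.exists_subset_of_mem_open hreflS hTopen
    obtain ⟨F, ⟨hFfin, hFsub⟩, rfl⟩ := hvB
    have hchoice : ∀ s : F, ∃ K : Set I, ∃ U : Set X,
        IsCompact K ∧ IsOpen U ∧ (s : Set C(I, X)) = {q : C(I, X) | MapsTo ⇑q K U} := by
      rintro ⟨s, hs⟩
      obtain ⟨K, hK, U, hU, h⟩ := hFsub hs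
      exact ⟨K, U, hK, hU, h.symm⟩
    choose K U hKc hUo hsEq using hchoice
    haveI : Finite F := hFfin.to_subtype
    set Wn : Set X := ⋂ s : F, (if (K s).Nonempty then U s else univ) with hWndef
    have hWnopen : IsOpen Wn := isOpen_iInter_of_finite fun s => by
      split_ifs with h
      · exact hUo s
      · exact isOpen_univ
    have hyW : y ∈ Wn := by
      refine mem_iInter.mpr fun s => ?_
      split_ifs with h
      · obtain ⟨k, hk⟩ := h
        have hms : ((Path.refl y : Path y y) : C(I, X)) ∈ (s : Set C(I, X)) :=
          mem_sInter.mp hv_mem s.1 s.2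
        rw [hsEq s] at hms
        have := hms hk
        exact this
      · exact mem_univ _
    have hWsub : ∀ s : F, (K s).Nonempty → Wn ⊆ U s := by
      intro s hne w hw
      have := mem_iInter.mp hw s
      rwa [if_pos hne] at this
    refine ⟨Wn, hWnopen, hyW, ?_⟩
    intro γ
    set γ' : Path y y := γ.map continuous_subtype_val with hγ'def
    have hγrange : ∀ r : I, γ' r ∈ Wn := fun r => (γ r).2
    have hγS : γ' ∈ S := by
      rw [← hTpre]
      apply hvsub
      refine mem_sInter.mpr fun s hs => ?_
      rw [show s = ((⟨s, hs⟩ : F) : Set C(I, X)) from rfl, hsEq ⟨s, hs⟩]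
      intro k hk
      exact hWsub ⟨s, hs⟩ ⟨k, hk⟩ (hγrange k)
    have hγq : (⟦(p.trans γ').trans p.symm⟧ : Path.Homotopic.Quotient x₀ x₀) =
        ⟦Path.refl x₀⟧ := hγS
    exact quot_conj p γ' (Quotient.exact hγq)
  · intro hS
    obtain ⟨x⟩ : Nonempty X := PathConnectedSpace.nonempty
    refine ⟨x, discreteTopology_iff_isOpen_singleton.mpr ?_⟩
    intro q
    obtain ⟨g, rfl⟩ := q.exists_rep
    apply isQuotientMap_quotient_mk'.isOpen_preimage.mp
    have hpre : Quotient.mk' ⁻¹' ({⟦g⟧} : Set (Quotient (Path.Homotopic.setoid x x))) =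
        {f : Path x x | f.Homotopic g} := by
      ext f
      simp only [mem_preimage, mem_singleton_iff, mem_setOf_eq]
      constructor
      · intro h
        exact Quotient.exact h
      · intro h
        exact Quotient.sound h
    refine Eq.mpr (congrArg IsOpen hpre) ?_
    rw [isOpen_iff_forall_mem_open]
    intro f0 hf0
    obtain ⟨N, hNopen, hf0N, hNall⟩ := open_class hS f0
    exact ⟨N, fun f hf => (hNall f hf).trans hf0, hNopen, hf0N⟩
end

section
/- If (X,x) is a pointed topological space, then the topological fundamental group π₁^top(X,x) is a homogeneous space: for any two elements a, b ∈ π₁^top(X,x) there exists a homeomorphism h : π₁^top(X,x) → π₁^top(X,x) with h(a) = b. -/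
attribute [local instance] Path.Homotopic.setoid

private lemma comp_left_continuous {X : Type*} [TopologicalSpace X] (x : X)
    (c : Path.Homotopic.Quotient x x) :
    Continuous fun p : Path.Homotopic.Quotient x x => Path.Homotopic.Quotient.trans c p := by
  obtain ⟨γ, rfl⟩ := Quotient.exists_rep c
  have key : (fun p : Path.Homotopic.Quotient x x => Path.Homotopic.Quotient.trans ⟦γ⟧ p) =
      Quotient.lift (fun q : Path x x => (⟦γ.trans q⟧ : Path.Homotopic.Quotient x x))
        (fun p q h => Quotient.sound (Path.Homotopic.hcomp (Path.Homotopic.refl γ) h)) := by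
    funext p
    induction p using Quotient.inductionOn with
    | h q => rfl
  rw [key]
  refine Continuous.quotient_lift ?_ _
  exact continuous_quotient_mk'.comp
    (Path.continuous_trans.comp (continuous_const.prodMk continuous_id))

open CategoryTheory in
theorem topological_fundamental_group_homogeneous
    {X : Type*} [TopologicalSpace X] (x : X)
    (a b : Path.Homotopic.Quotient x x) :
    ∃ h : Path.Homotopic.Quotient x x ≃ₜ Path.Homotopic.Quotient x x, h a = b := by
  -- Work in the fundamental groupoid; loops at `x` are endomorphisms of `⟨x⟩`.
  let pt : FundamentalGroupoid X := ⟨x⟩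
  let a' : pt ⟶ pt := a
  let b' : pt ⟶ pt := b
  let c : pt ⟶ pt := b' ≫ Groupoid.inv a'
  let d : pt ⟶ pt := Groupoid.inv c
  refine ⟨{
    toFun := fun p => Path.Homotopic.Quotient.trans c p
    invFun := fun p => Path.Homotopic.Quotient.trans d p
    left_inv := fun p => by
      show d ≫ (c ≫ (p : pt ⟶ pt)) = p
      rw [← Category.assoc, Groupoid.inv_comp, Category.id_comp]
    right_inv := fun p => by
      show c ≫ (d ≫ (p : pt ⟶ pt)) = p
      rw [← Category.assoc, Groupoid.comp_inv, Category.id_comp]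
    continuous_toFun := comp_left_continuous x c
    continuous_invFun := comp_left_continuous x d }, ?_⟩
  show c ≫ a' = b'
  simp only [c, Category.assoc, Groupoid.inv_comp, Category.comp_id]
end

section
/- Let (X,x) be a pointed topological space and let [f] ∈ π₁^top(X,x). Then left translation L_[f] : π₁^top(X,x) → π₁^top(X,x), [g] ↦ [f]·[g], is a homeomorphism of π₁^top(X,x). -/
attribute [local instance] Path.Homotopic.setoid

private lemma continuous_comp_left_aux {X : Type*} [TopologicalSpace X] {x : X}
    (f : Path.Homotopic.Quotient x x) :
    Continuous (fun g : Path.Homotopic.Quotient x x => f.trans g) := by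
  apply isQuotientMap_quotient_mk'.continuous_iff.mpr
  obtain ⟨p, rfl⟩ := Quotient.exists_rep f
  have : (fun q : Path x x =>
      Path.Homotopic.Quotient.trans (⟦p⟧ : Path.Homotopic.Quotient x x) (Quotient.mk' q)) =
      fun q : Path x x => (⟦p.trans q⟧ : Path.Homotopic.Quotient x x) := rfl
  show Continuous fun q : Path x x =>
      Path.Homotopic.Quotient.trans (⟦p⟧ : Path.Homotopic.Quotient x x) (Quotient.mk' q)
  rw [this]
  exact continuous_quotient_mk'.comp (continuous_const.path_trans continuous_id)

theorem left_translation_isHomeomorph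
    {X : Type*} [TopologicalSpace X] (x : X) (f : Path.Homotopic.Quotient x x) :
    IsHomeomorph (fun g : Path.Homotopic.Quotient x x => f.trans g) := by
  obtain ⟨p, rfl⟩ := Quotient.exists_rep f
  refine isHomeomorph_iff_exists_inverse.mpr ⟨continuous_comp_left_aux _,
    fun g => Path.Homotopic.Quotient.trans (⟦p.symm⟧ : Path.Homotopic.Quotient x x) g,
    ?_, ?_, continuous_comp_left_aux _⟩
  · intro g
    refine Quotient.inductionOn g fun q => ?_
    show (⟦(p.symm).trans (p.trans q)⟧ : Path.Homotopic.Quotient x x) = ⟦q⟧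
    calc (⟦(p.symm).trans (p.trans q)⟧ : Path.Homotopic.Quotient x x)
        = ⟦(p.symm.trans p).trans q⟧ :=
          Quotient.sound ⟨(Path.Homotopy.transAssoc p.symm p q).symm⟩
      _ = ⟦(Path.refl x).trans q⟧ :=
          Quotient.sound ⟨(Path.Homotopy.reflSymmTrans p).symm.hcomp
            (Path.Homotopy.refl q)⟩
      _ = ⟦q⟧ := Quotient.sound ⟨Path.Homotopy.reflTrans q⟩
  · intro g
    refine Quotient.inductionOn g fun q => ?_
    show (⟦p.trans ((p.symm).trans q)⟧ : Path.Homotopic.Quotient x x) = ⟦q⟧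
    calc (⟦p.trans ((p.symm).trans q)⟧ : Path.Homotopic.Quotient x x)
        = ⟦(p.trans p.symm).trans q⟧ :=
          Quotient.sound ⟨(Path.Homotopy.transAssoc p p.symm q).symm⟩
      _ = ⟦(Path.refl x).trans q⟧ :=
          Quotient.sound ⟨(Path.Homotopy.reflTransSymm p).symm.hcomp
            (Path.Homotopy.refl q)⟩
      _ = ⟦q⟧ := Quotient.sound ⟨Path.Homotopy.reflTrans q⟩
end

section
/- Let X be a topological space and let x, y ∈ X. If x and y lie in the same path component of X, then the topological fundamental groups π₁^top(X,x) and π₁^top(X,y) are homeomorphic. -/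
attribute [local instance] Path.Homotopic.setoid

open CategoryTheory in
private lemma conj_conj_aux {X : Type*} [TopologicalSpace X] {x y : X}
    (γ : Path x y) (p : Path x x) :
    (⟦(γ.symm.symm.trans ((γ.symm.trans (p.trans γ)).trans γ.symm))⟧ :
      Path.Homotopic.Quotient x x) = ⟦p⟧ := by
  have tr : ∀ {a b c : X} (u : Path a b) (v : Path b c),
      (⟦u.trans v⟧ : Path.Homotopic.Quotient a c) =
        CategoryStruct.comp (obj := FundamentalGroupoid X)
          (X := ⟨a⟩) (Y := ⟨b⟩) (Z := ⟨c⟩) ⟦u⟧ ⟦v⟧ := fun _ _ => rfl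
  have inv_eq : ∀ {a b : X} (u : Path a b),
      (⟦u.symm⟧ : (FundamentalGroupoid.mk b : FundamentalGroupoid X) ⟶ FundamentalGroupoid.mk a)
        = Groupoid.inv (obj := FundamentalGroupoid X)
            (X := FundamentalGroupoid.mk a) (Y := FundamentalGroupoid.mk b) ⟦u⟧ :=
    fun _ => rfl
  show (⟦(γ.symm.symm.trans ((γ.symm.trans (p.trans γ)).trans γ.symm))⟧ :
    (FundamentalGroupoid.mk x : FundamentalGroupoid X) ⟶ FundamentalGroupoid.mk x) = ⟦p⟧
  rw [tr, tr, tr, tr, inv_eq γ, inv_eq γ.symm, inv_eq γ]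
  simp
  rfl

private lemma conj_resp {X : Type*} [TopologicalSpace X] {x y : X} (γ : Path x y) :
    ∀ a b : Path x x, a ≈ b →
      (γ.symm.trans (a.trans γ)) ≈ (γ.symm.trans (b.trans γ)) :=
  fun _ _ hab => (Path.Homotopic.refl γ.symm).hcomp (hab.hcomp (Path.Homotopic.refl γ))

private lemma conj_cont {X : Type*} [TopologicalSpace X] {x y : X} (γ : Path x y) :
    Continuous fun p : Path x x => γ.symm.trans (p.trans γ) :=
  (continuous_const.path_trans (continuous_id.path_trans continuous_const))

theorem topological_fundamental_group_homeomorphic_of_joined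
    {X : Type*} [TopologicalSpace X] {x y : X} (h : Joined x y) :
    Nonempty (Path.Homotopic.Quotient x x ≃ₜ Path.Homotopic.Quotient y y) := by
  obtain ⟨γ⟩ := h
  refine ⟨{
    toFun := Quotient.map (fun p => γ.symm.trans (p.trans γ)) (conj_resp γ)
    invFun := Quotient.map (fun p => γ.symm.symm.trans (p.trans γ.symm)) (conj_resp γ.symm)
    left_inv := fun q => Quotient.inductionOn q fun p => by
      rw [Quotient.map_mk, Quotient.map_mk]
      exact conj_conj_aux γ p
    right_inv := fun q => Quotient.inductionOn q fun p => by
      have := conj_conj_aux γ.symm p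
      simp only [Path.symm_symm] at this
      rw [Quotient.map_mk, Quotient.map_mk]
      simp only [Path.symm_symm]
      exact this
    continuous_toFun := Continuous.quotient_map' (conj_cont γ) (conj_resp γ)
    continuous_invFun := Continuous.quotient_map' (conj_cont γ.symm) (conj_resp γ.symm) }⟩
end

section
/- Let X be a locally path connected and semilocally simply-connected topological space and let x ∈ X. Then the multiplication map μ : π₁^top(X,x) × π₁^top(X,x) → π₁^top(X,x), ([f],[g]) ↦ [f]·[g], is continuous, where the domain carries the product topology. -/
attribute [local instance] Path.Homotopic.setoid

open Set unitInterval Metric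

namespace MyAux

variable {X : Type*} [TopologicalSpace X]

/-- Splitting a truncated path at an intermediate time. -/
lemma trunc_split {a b : X} (γ : Path a b) {u v w : ℝ}
    (hu : 0 ≤ u) (huv : u ≤ v) (hvw : v ≤ w) (hw : w ≤ 1) :
    ((γ.truncateOfLE huv).trans (γ.truncateOfLE hvw)).Homotopic
      (γ.truncateOfLE (huv.trans hvw)) := by
  have hv0 : 0 ≤ v := hu.trans huv
  have hu1 : u ≤ 1 := (huv.trans hvw).trans hw
  have hv1 : v ≤ 1 := hvw.trans hw
  set φ₀ : I → ℝ := fun t => if (t : ℝ) ≤ 1 / 2 then min (max (2 * t) u) v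
      else min (max (2 * t - 1) v) w with hφ₀
  set φ₁ : I → ℝ := fun t => min (max t u) w with hφ₁
  have lhs_eq : ∀ t : I, ((γ.truncateOfLE huv).trans (γ.truncateOfLE hvw)) t = γ.extend (φ₀ t) := by
    intro t
    rw [Path.trans_apply]
    split_ifs with h
    · simp only [hφ₀]; rw [if_pos h]; rfl
    · simp only [hφ₀]; rw [if_neg h]; rfl
  have rhs_eq : ∀ t : I, (γ.truncateOfLE (huv.trans hvw)) t = γ.extend (φ₁ t) := fun t => rfl
  have hφ₀cont : Continuous φ₀ := by
    apply Continuous.if_le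
    · fun_prop
    · fun_prop
    · fun_prop
    · fun_prop
    · intro t ht
      rw [ht, show (2:ℝ) * (1/2) = 1 by norm_num, max_eq_left hu1, min_eq_right hv1,
        show (1:ℝ) - 1 = 0 from sub_self 1, max_eq_right hv0, min_eq_left hvw]
  have hφ₁cont : Continuous φ₁ := by fun_prop
  have hφ₀zero : φ₀ 0 = u := by
    simp only [hφ₀]
    rw [if_pos (by norm_num : ((0:I):ℝ) ≤ 1/2),
      show (2:ℝ) * ((0:I):ℝ) = 0 by norm_num, max_eq_right hu, min_eq_left huv]
  have hφ₁zero : φ₁ 0 = u := by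
    simp only [hφ₁]
    rw [show ((0:I):ℝ) = 0 from rfl, max_eq_right hu, min_eq_left (huv.trans hvw)]
  have hφ₀one : φ₀ 1 = w := by
    simp only [hφ₀]
    rw [if_neg (by norm_num : ¬ ((1:I):ℝ) ≤ 1/2),
      show (2:ℝ) * ((1:I):ℝ) - 1 = 1 by norm_num, max_eq_left hv1, min_eq_right hw]
  have hφ₁one : φ₁ 1 = w := by
    simp only [hφ₁]
    rw [show ((1:I):ℝ) = 1 from rfl, max_eq_left hu1, min_eq_right hw]
  refine ⟨⟨⟨⟨fun q => γ.extend ((1 - (q.1 : ℝ)) * φ₀ q.2 + (q.1 : ℝ) * φ₁ q.2), ?_⟩, ?_, ?_⟩, ?_⟩⟩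
  · exact γ.continuous_extend.comp (by fun_prop)
  · intro t
    show γ.extend _ = _
    rw [show (1 - ((0:I):ℝ)) * φ₀ t + ((0:I):ℝ) * φ₁ t = φ₀ t by norm_num]
    exact (lhs_eq t).symm
  · intro t
    show γ.extend _ = _
    rw [show (1 - ((1:I):ℝ)) * φ₀ t + ((1:I):ℝ) * φ₁ t = φ₁ t by norm_num]
    exact (rhs_eq t).symm
  · intro t s hs
    show γ.extend _ = _
    have : (1 - (t : ℝ)) * φ₀ s + (t : ℝ) * φ₁ s = φ₀ s := by
      rcases hs with h | h <;> subst h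
      · rw [hφ₀zero, hφ₁zero]; ring
      · rw [hφ₀one, hφ₁one]; ring
    rw [this]
    exact (lhs_eq s).symm


lemma homotopic_of_coe_eq {a b : X} {p q : Path a b} (h : ⇑p = ⇑q) : p.Homotopic q := by
  have : p = q := by ext t; exact congrFun h t
  rw [this]

lemma homotopic_cast {a b a' b' : X} {p q : Path a b} (h : p.Homotopic q)
    (h1 : a' = a) (h2 : b' = b) : (p.cast h1 h2).Homotopic (q.cast h1 h2) := by
  subst h1; subst h2
  have hp : p.cast rfl rfl = p := by ext t; rfl
  have hq : q.cast rfl rfl = q := by ext t; rfl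
  rwa [hp, hq]

lemma trans_coe {a b c a' b' c' : X} {p : Path a b} {q : Path b c}
    {p' : Path a' b'} {q' : Path b' c'} (hp : ⇑p = ⇑p') (hq : ⇑q = ⇑q') :
    ⇑(p.trans q) = ⇑(p'.trans q') := by
  funext t
  rw [Path.trans_apply, Path.trans_apply]
  split_ifs with h
  · exact congrFun hp _
  · exact congrFun hq _

lemma ht_assoc {a b c d : X} (p : Path a b) (q : Path b c) (r : Path c d) :
    ((p.trans q).trans r).Homotopic (p.trans (q.trans r)) :=
  ⟨Path.Homotopy.transAssoc p q r⟩

lemma ht_reflTrans {a b : X} (p : Path a b) : ((Path.refl a).trans p).Homotopic p :=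
  ⟨Path.Homotopy.reflTrans p⟩

lemma ht_transRefl {a b : X} (p : Path a b) : (p.trans (Path.refl b)).Homotopic p :=
  ⟨Path.Homotopy.transRefl p⟩

lemma ht_symmTrans {a b : X} (p : Path a b) : (p.symm.trans p).Homotopic (Path.refl b) :=
  ⟨(Path.Homotopy.reflSymmTrans p).symm⟩

lemma ht_transSymm {a b : X} (p : Path a b) : (p.trans p.symm).Homotopic (Path.refl a) :=
  ⟨(Path.Homotopy.reflTransSymm p).symm⟩

/-- Cancelling `s.symm` against `s` in the middle of a concatenation. -/
lemma cancel_mid {a b c d : X} (A : Path a c) (s : Path b c) (B : Path c d) :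
    ((A.trans s.symm).trans (s.trans B)).Homotopic (A.trans B) := by
  calc (A.trans s.symm).trans (s.trans B)
      ≈ A.trans (s.symm.trans (s.trans B)) := ht_assoc _ _ _
    _ ≈ A.trans ((s.symm.trans s).trans B) :=
        Path.Homotopic.hcomp (Path.Homotopic.refl A) ((ht_assoc s.symm s B).symm)
    _ ≈ A.trans ((Path.refl c).trans B) :=
        Path.Homotopic.hcomp (Path.Homotopic.refl A)
          (Path.Homotopic.hcomp (ht_symmTrans s) (Path.Homotopic.refl B))
    _ ≈ A.trans B :=
        Path.Homotopic.hcomp (Path.Homotopic.refl A) (ht_reflTrans B)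

/-- A set in which any two paths with the same endpoints are homotopic (in `X`). -/
def GoodSet (V : Set X) : Prop :=
  ∀ ⦃a b : X⦄ (α β : Path a b), range α ⊆ V → range β ⊆ V → α.Homotopic β

lemma goodSet_loop {V : Set X} (hV : ∀ ⦃a : X⦄ (ℓ : Path a a),
    range ℓ ⊆ V → ℓ.Homotopic (Path.refl a)) : GoodSet V := by
  intro a b α β hα hβ
  have hloop : (α.trans β.symm).Homotopic (Path.refl a) := by
    apply hV
    rw [Path.trans_range]
    exact union_subset hα (by rwa [Path.symm_range])
  calc α ≈ α.trans (Path.refl b) := (ht_transRefl α).symm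
    _ ≈ α.trans (β.symm.trans β) :=
        Path.Homotopic.hcomp (Path.Homotopic.refl α) (ht_symmTrans β).symm
    _ ≈ (α.trans β.symm).trans β := (ht_assoc _ _ _).symm
    _ ≈ (Path.refl a).trans β := Path.Homotopic.hcomp hloop (Path.Homotopic.refl β)
    _ ≈ β := ht_reflTrans β

lemma exists_good [LocallyPathConnectedSpace X] (hX : SemilocallySimplyConnected X) (y : X) :
    ∃ V : Set X, IsOpen V ∧ y ∈ V ∧ GoodSet V := by
  obtain ⟨U, hUo, hyU, hU⟩ := hX y
  refine ⟨pathComponentIn U y, hUo.pathComponentIn y, mem_pathComponentIn_self hyU, ?_⟩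
  apply goodSet_loop
  intro a ℓ hℓ
  have ha : a ∈ pathComponentIn U y := hℓ ⟨0, ℓ.source⟩
  obtain ⟨p, hp⟩ : JoinedIn U y a := ha
  have hℓU : range ℓ ⊆ U := hℓ.trans pathComponentIn_subset
  -- the conjugated loop, at `y`, inside `U`
  set L : Path y y := p.trans (ℓ.trans p.symm) with hL
  have hLU : range L ⊆ U := by
    rw [hL, Path.trans_range, Path.trans_range, Path.symm_range]
    refine union_subset (range_subset_iff.2 hp) (union_subset hℓU (range_subset_iff.2 hp))
  -- lift `L` to a loop in the subtype `U`
  set γ : Path (⟨y, hyU⟩ : U) (⟨y, hyU⟩ : U) :=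
    { toFun := fun t => ⟨L t, hLU (mem_range_self t)⟩
      continuous_toFun := Continuous.subtype_mk L.continuous _
      source' := Subtype.ext L.source
      target' := Subtype.ext L.target } with hγ
  have hmap : ⇑(γ.map continuous_subtype_val) = ⇑L := rfl
  have hLrefl : L.Homotopic (Path.refl y) :=
    ((homotopic_of_coe_eq hmap).symm).trans (hU γ)
  -- now cancel the conjugation
  calc ℓ ≈ (Path.refl a).trans (ℓ.trans (Path.refl a)) :=
        ((ht_transRefl ℓ).symm).trans (ht_reflTrans (ℓ.trans (Path.refl a))).symm
    _ ≈ (p.symm.trans p).trans (ℓ.trans (p.symm.trans p)) := by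
        exact Path.Homotopic.hcomp (ht_symmTrans p).symm
          (Path.Homotopic.hcomp (Path.Homotopic.refl ℓ) (ht_symmTrans p).symm)
    _ ≈ p.symm.trans (L.trans p) := ?_
    _ ≈ p.symm.trans ((Path.refl y).trans p) :=
        Path.Homotopic.hcomp (Path.Homotopic.refl p.symm)
          (Path.Homotopic.hcomp hLrefl (Path.Homotopic.refl p))
    _ ≈ p.symm.trans p :=
        Path.Homotopic.hcomp (Path.Homotopic.refl p.symm) (ht_reflTrans p)
    _ ≈ Path.refl a := ht_symmTrans p
  · -- (p.symm.trans p).trans (ℓ.trans (p.symm.trans p)) ≈ p.symm.trans (L.trans p)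
    calc (p.symm.trans p).trans (ℓ.trans (p.symm.trans p))
        ≈ p.symm.trans (p.trans (ℓ.trans (p.symm.trans p))) := ht_assoc _ _ _
      _ ≈ p.symm.trans (p.trans ((ℓ.trans p.symm).trans p)) :=
          Path.Homotopic.hcomp (Path.Homotopic.refl _)
            (Path.Homotopic.hcomp (Path.Homotopic.refl p) (ht_assoc ℓ p.symm p).symm)
      _ ≈ p.symm.trans ((p.trans (ℓ.trans p.symm)).trans p) :=
          Path.Homotopic.hcomp (Path.Homotopic.refl _) (ht_assoc p (ℓ.trans p.symm) p).symm
      _ ≈ p.symm.trans (L.trans p) := Path.Homotopic.refl _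


lemma main_induction {x : X} (f g : Path x x) (n : ℕ) (hn : 0 < n)
    (V : ℕ → Set X) (HV : ∀ k, k < n → GoodSet (V k))
    (Hf : ∀ k, k < n → ∀ s : I, (k : ℝ)/(n : ℝ) ≤ (s : ℝ) →
      (s : ℝ) ≤ ((k+1 : ℕ) : ℝ)/(n : ℝ) → f s ∈ V k)
    (Hg : ∀ k, k < n → ∀ s : I, (k : ℝ)/(n : ℝ) ≤ (s : ℝ) →
      (s : ℝ) ≤ ((k+1 : ℕ) : ℝ)/(n : ℝ) → g s ∈ V k)
    (h : ∀ k : ℕ, Path (f.extend ((k : ℝ)/(n : ℝ))) (g.extend ((k : ℝ)/(n : ℝ))))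
    (Hh1 : ∀ k, 0 < k → k < n → range (h k) ⊆ V (k-1) ∩ V k)
    (Hh0 : ∀ t, (h 0) t = x) (Hhn : ∀ t, (h n) t = x) :
    f.Homotopic g := by
  have hn' : (0:ℝ) < (n:ℝ) := by exact_mod_cast hn
  have e_nonneg : ∀ k : ℕ, 0 ≤ (k:ℝ)/(n:ℝ) := fun k => div_nonneg (Nat.cast_nonneg k) hn'.le
  have e_mono : ∀ k : ℕ, (k:ℝ)/(n:ℝ) ≤ ((k+1 : ℕ):ℝ)/(n:ℝ) := by
    intro k; gcongr; exact_mod_cast Nat.le_succ k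
  have e_le_one : ∀ k : ℕ, k ≤ n → (k:ℝ)/(n:ℝ) ≤ 1 := by
    intro k hk; rw [div_le_one hn']; exact_mod_cast hk
  have hx0f : x = f.extend 0 := f.extend_zero.symm
  have hx0g : x = g.extend 0 := g.extend_zero.symm
  let F : ∀ k : ℕ, Path x (f.extend ((k:ℝ)/(n:ℝ))) :=
    fun k => (f.truncateOfLE (e_nonneg k)).cast hx0f rfl
  let G : ∀ k : ℕ, Path x (g.extend ((k:ℝ)/(n:ℝ))) :=
    fun k => (g.truncateOfLE (e_nonneg k)).cast hx0g rfl
  let Pf : ∀ k : ℕ, Path (f.extend ((k:ℝ)/(n:ℝ))) (f.extend (((k+1:ℕ):ℝ)/(n:ℝ))) :=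
    fun k => f.truncateOfLE (e_mono k)
  let Pg : ∀ k : ℕ, Path (g.extend ((k:ℝ)/(n:ℝ))) (g.extend (((k+1:ℕ):ℝ)/(n:ℝ))) :=
    fun k => g.truncateOfLE (e_mono k)
  -- membership of x in the first and last pieces
  have hxV0 : x ∈ V 0 := by
    have := Hf 0 hn 0 (by simp) (by simpa using e_nonneg 1)
    simpa using this
  have hxVlast : x ∈ V (n-1) := by
    have h1 : ((n-1 : ℕ):ℝ)/(n:ℝ) ≤ ((1:I) : ℝ) := by
      simpa using e_le_one (n-1) (Nat.sub_le n 1)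
    have h2 : ((1:I) : ℝ) ≤ (((n-1)+1 : ℕ):ℝ)/(n:ℝ) := by
      rw [Nat.sub_add_cancel hn]
      rw [show ((1:I):ℝ) = 1 from rfl, le_div_iff₀ hn', one_mul]
    have := Hf (n-1) (Nat.sub_lt hn one_pos) 1 h1 h2
    simpa using this
  -- the main inductive claim
  have key : ∀ k, k ≤ n → (F k).Homotopic ((G k).trans (h k).symm) := by
    intro k
    induction k with
    | zero =>
      intro _
      apply homotopic_of_coe_eq
      funext t
      have hL : (F 0) t = x := by
        show f.extend (min (max (t:ℝ) 0) (((0:ℕ):ℝ)/(n:ℝ))) = x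
        rw [show (((0:ℕ):ℝ)/(n:ℝ)) = 0 by simp, min_eq_right (le_max_right _ _),
          f.extend_zero]
      have hR : ((G 0).trans (h 0).symm) t = x := by
        rw [Path.trans_apply]
        split_ifs with ht
        · show g.extend (min (max _ 0) (((0:ℕ):ℝ)/(n:ℝ))) = x
          rw [show (((0:ℕ):ℝ)/(n:ℝ)) = 0 by simp, min_eq_right (le_max_right _ _),
            g.extend_zero]
        · exact Hh0 _
      rw [hL]
      exact hR.symm
    | succ k IH =>
      intro hk1
      have hkn : k < n := Nat.lt_of_lt_of_le (Nat.lt_succ_self k) hk1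
      have IH' := IH hkn.le
      -- ranges
      have hrangePf : range (Pf k) ⊆ V k := by
        rintro _ ⟨t, rfl⟩
        have h1 : (k:ℝ)/(n:ℝ) ≤ min (max (t:ℝ) ((k:ℝ)/(n:ℝ))) (((k+1:ℕ):ℝ)/(n:ℝ)) :=
          le_min (le_max_right _ _) (e_mono k)
        have h2 : min (max (t:ℝ) ((k:ℝ)/(n:ℝ))) ((((k+1:ℕ):ℝ)/(n:ℝ))) ≤ (((k+1:ℕ):ℝ)/(n:ℝ)) :=
          min_le_right _ _
        have h0 : 0 ≤ min (max (t:ℝ) ((k:ℝ)/(n:ℝ))) ((((k+1:ℕ):ℝ)/(n:ℝ))) :=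
          (e_nonneg k).trans h1
        have hle1 : min (max (t:ℝ) ((k:ℝ)/(n:ℝ))) ((((k+1:ℕ):ℝ)/(n:ℝ))) ≤ 1 :=
          h2.trans (e_le_one (k+1) hk1)
        show f.extend _ ∈ V k
        rw [Path.extend_apply f ⟨h0, hle1⟩]
        exact Hf k hkn _ h1 h2
      have hrangePg : range (Pg k) ⊆ V k := by
        rintro _ ⟨t, rfl⟩
        have h1 : (k:ℝ)/(n:ℝ) ≤ min (max (t:ℝ) ((k:ℝ)/(n:ℝ))) (((k+1:ℕ):ℝ)/(n:ℝ)) :=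
          le_min (le_max_right _ _) (e_mono k)
        have h2 : min (max (t:ℝ) ((k:ℝ)/(n:ℝ))) ((((k+1:ℕ):ℝ)/(n:ℝ))) ≤ (((k+1:ℕ):ℝ)/(n:ℝ)) :=
          min_le_right _ _
        have h0 : 0 ≤ min (max (t:ℝ) ((k:ℝ)/(n:ℝ))) ((((k+1:ℕ):ℝ)/(n:ℝ))) :=
          (e_nonneg k).trans h1
        have hle1 : min (max (t:ℝ) ((k:ℝ)/(n:ℝ))) ((((k+1:ℕ):ℝ)/(n:ℝ))) ≤ 1 :=
          h2.trans (e_le_one (k+1) hk1)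
        show g.extend _ ∈ V k
        rw [Path.extend_apply g ⟨h0, hle1⟩]
        exact Hg k hkn _ h1 h2
      have hhk_sub : range (h k) ⊆ V k := by
        rcases Nat.eq_zero_or_pos k with rfl | hk0
        · rintro _ ⟨t, rfl⟩
          rw [Hh0 t]
          exact hxV0
        · exact (Hh1 k hk0 hkn).trans inter_subset_right
      have hhk1_sub : range (h (k+1)) ⊆ V k := by
        rcases eq_or_lt_of_le hk1 with heq | hlt
        · rintro _ ⟨t, rfl⟩
          have hx' : (h (k+1)) t = x := by rw [heq]; exact Hhn t
          rw [hx']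
          have : k = n - 1 := by omega
          rw [this]
          exact hxVlast
        · have := Hh1 (k+1) (Nat.succ_pos k) hlt
          simpa using this.trans inter_subset_left
      -- key homotopy in `V k`
      have hS3 : (Pf k).Homotopic ((h k).trans ((Pg k).trans (h (k+1)).symm)) := by
        apply HV k hkn
        · exact hrangePf
        · rw [Path.trans_range, Path.trans_range, Path.symm_range]
          exact union_subset hhk_sub (union_subset hrangePg hhk1_sub)
      -- splitting of the truncated paths
      have hsplitf := trunc_split f (le_refl 0) (e_nonneg k) (e_mono k) (e_le_one (k+1) hk1)
      have hsplitg := trunc_split g (le_refl 0) (e_nonneg k) (e_mono k) (e_le_one (k+1) hk1)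
      have hcoef : ⇑(((f.truncateOfLE (e_nonneg k)).trans (Pf k)).cast hx0f rfl)
          = ⇑((F k).trans (Pf k)) := by
        rw [Path.cast_coe]
        exact trans_coe (Path.cast_coe _ _ _).symm rfl
      have hcoeg : ⇑(((g.truncateOfLE (e_nonneg k)).trans (Pg k)).cast hx0g rfl)
          = ⇑((G k).trans (Pg k)) := by
        rw [Path.cast_coe]
        exact trans_coe (Path.cast_coe _ _ _).symm rfl
      have S1 : (F (k+1)).Homotopic ((F k).trans (Pf k)) :=
        Path.Homotopic.trans (homotopic_cast hsplitf.symm hx0f rfl) (homotopic_of_coe_eq hcoef)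
      have SG : (G (k+1)).Homotopic ((G k).trans (Pg k)) :=
        Path.Homotopic.trans (homotopic_cast hsplitg.symm hx0g rfl) (homotopic_of_coe_eq hcoeg)
      calc F (k+1)
          ≈ (F k).trans (Pf k) := S1
        _ ≈ ((G k).trans (h k).symm).trans (Pf k) :=
            Path.Homotopic.hcomp IH' (Path.Homotopic.refl _)
        _ ≈ ((G k).trans (h k).symm).trans ((h k).trans ((Pg k).trans (h (k+1)).symm)) :=
            Path.Homotopic.hcomp (Path.Homotopic.refl _) hS3
        _ ≈ (G k).trans ((Pg k).trans (h (k+1)).symm) :=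
            cancel_mid (G k) (h k) ((Pg k).trans (h (k+1)).symm)
        _ ≈ ((G k).trans (Pg k)).trans (h (k+1)).symm := (ht_assoc _ _ _).symm
        _ ≈ (G (k+1)).trans (h (k+1)).symm :=
            Path.Homotopic.hcomp SG.symm (Path.Homotopic.refl _)
  -- conclude
  have hdiv : ((n:ℝ))/(n:ℝ) = 1 := div_self (ne_of_gt hn')
  have hend_f : x = f.extend ((n:ℝ)/(n:ℝ)) := by rw [hdiv, f.extend_one]
  have hend_g : x = g.extend ((n:ℝ)/(n:ℝ)) := by rw [hdiv, g.extend_one]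
  have hFx : ⇑f = ⇑((F n).cast rfl hend_f) := by
    funext t
    rw [Path.cast_coe]
    show _ = f.extend (min (max (t:ℝ) 0) ((n:ℝ)/(n:ℝ)))
    rw [hdiv, max_eq_left t.2.1, min_eq_left t.2.2, Path.extend_extends' f t]
  have hGx : ⇑((G n).cast rfl hend_g) = ⇑g := by
    funext t
    rw [Path.cast_coe]
    show g.extend (min (max (t:ℝ) 0) ((n:ℝ)/(n:ℝ))) = _
    rw [hdiv, max_eq_left t.2.1, min_eq_left t.2.2, Path.extend_extends' g t]
  have hhx : ⇑(((h n).symm).cast hend_g hend_f) = ⇑(Path.refl x) := by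
    funext t
    rw [Path.cast_coe]
    show (h n) _ = x
    rw [Hhn]
  calc f ≈ (F n).cast rfl hend_f := homotopic_of_coe_eq hFx
    _ ≈ ((G n).trans (h n).symm).cast rfl hend_f := homotopic_cast (key n le_rfl) rfl hend_f
    _ ≈ ((G n).cast rfl hend_g).trans (((h n).symm).cast hend_g hend_f) := by
        apply homotopic_of_coe_eq
        rw [Path.cast_coe]
        exact trans_coe (Path.cast_coe _ _ _).symm (Path.cast_coe _ _ _).symm
    _ ≈ g.trans (Path.refl x) :=
        Path.Homotopic.hcomp (homotopic_of_coe_eq hGx) (homotopic_of_coe_eq hhx)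
    _ ≈ g := ht_transRefl g


/-- Every loop has a neighborhood consisting of loops homotopic to it. -/
lemma homotopy_class_nhds [LocallyPathConnectedSpace X] (hX : SemilocallySimplyConnected X)
    (x : X) (f : Path x x) :
    ∃ N : Set (Path x x), IsOpen N ∧ f ∈ N ∧ ∀ g ∈ N, g.Homotopic f := by
  classical
  choose V hVo hVmem hVgood using fun s : I => exists_good hX (f s)
  obtain ⟨δ, hδ, hleb⟩ := lebesgue_number_lemma_of_metric (s := (univ : Set I))
    (c := fun s : I => f ⁻¹' (V s)) isCompact_univ
    (fun s => (hVo s).preimage f.continuous)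
    (fun t _ => mem_iUnion.2 ⟨t, hVmem t⟩)
  choose sel hsel using fun t : I => hleb t (mem_univ t)
  obtain ⟨m, hm⟩ := exists_nat_one_div_lt hδ
  set n : ℕ := m + 1 with hn_def
  have hn : 0 < n := Nat.succ_pos m
  have hn' : (0:ℝ) < (n:ℝ) := by exact_mod_cast hn
  have hinv : 1 / (n:ℝ) < δ := by rw [hn_def]; push_cast; exact hm
  have hmem_τ : ∀ k : ℕ, k ≤ n → (k:ℝ)/(n:ℝ) ∈ Icc (0:ℝ) 1 := by
    intro k hk
    exact ⟨by positivity, by rw [div_le_one hn']; exact_mod_cast hk⟩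
  set τ : ℕ → I := fun k => projIcc (0:ℝ) 1 zero_le_one ((k:ℝ)/(n:ℝ)) with hτ_def
  have hτcoe : ∀ k : ℕ, k ≤ n → ((τ k : I) : ℝ) = (k:ℝ)/(n:ℝ) := by
    intro k hk
    rw [hτ_def]
    simp only
    rw [projIcc_of_mem _ (hmem_τ k hk)]
  set VV : ℕ → Set X := fun k => V (sel (τ k)) with hVV_def
  have hVVo : ∀ k, IsOpen (VV k) := fun k => hVo _
  have hVVgood : ∀ k, GoodSet (VV k) := fun k => hVgood _
  have hstep : ∀ k : ℕ, ((k+1:ℕ):ℝ)/(n:ℝ) = (k:ℝ)/(n:ℝ) + 1/(n:ℝ) := by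
    intro k; push_cast; ring
  have hseg : ∀ k : ℕ, k < n → ∀ s : I, (k:ℝ)/(n:ℝ) ≤ (s:ℝ) →
      (s:ℝ) ≤ ((k+1:ℕ):ℝ)/(n:ℝ) → s ∈ ball (τ k) δ := by
    intro k hk s h1 h2
    rw [mem_ball, Subtype.dist_eq, Real.dist_eq, hτcoe k hk.le, abs_lt]
    rw [hstep k] at h2
    constructor <;> linarith
  have Hfseg : ∀ k, k < n → ∀ s : I, (k:ℝ)/(n:ℝ) ≤ (s:ℝ) →
      (s:ℝ) ≤ ((k+1:ℕ):ℝ)/(n:ℝ) → f s ∈ VV k :=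
    fun k hk s h1 h2 => hsel (τ k) (hseg k hk s h1 h2)
  have hfτ : ∀ k, 0 < k → k < n → f (τ k) ∈ VV (k-1) ∩ VV k := by
    intro k h0 hk
    have hsucc : (k-1) + 1 = k := Nat.succ_pred_eq_of_pos h0
    constructor
    · apply Hfseg (k-1) (by omega) (τ k)
      · rw [hτcoe k hk.le]; gcongr; exact_mod_cast Nat.sub_le k 1
      · rw [hτcoe k hk.le, hsucc]
    · apply Hfseg k hk (τ k)
      · rw [hτcoe k hk.le]
      · rw [hτcoe k hk.le, hstep k]
        have : (0:ℝ) ≤ 1/(n:ℝ) := by positivity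
        linarith
  set W : ℕ → Set X := fun k => pathComponentIn (VV (k-1) ∩ VV k) (f (τ k)) with hW_def
  have hWo : ∀ k, IsOpen (W k) := fun k => ((hVVo _).inter (hVVo _)).pathComponentIn _
  -- the open set in C(I, X)
  set O : Set C(I, X) :=
    (⋂ k ∈ Finset.range n, {F : C(I,X) | MapsTo F (Icc (τ k) (τ (k+1))) (VV k)}) ∩
    (⋂ k ∈ Finset.Ioo 0 n, {F : C(I,X) | F (τ k) ∈ W k}) with hO_def
  have hOopen : IsOpen O := by
    apply IsOpen.inter
    · exact isOpen_biInter_finset fun k _ =>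
        ContinuousMap.isOpen_setOf_mapsTo isClosed_Icc.isCompact (hVVo k)
    · exact isOpen_biInter_finset fun k _ =>
        (hWo k).preimage (continuous_eval_const (τ k))
  refine ⟨(fun p : Path x x => (p : C(I, X))) ⁻¹' O, hOopen.preimage continuous_induced_dom,
    ?_, ?_⟩
  · -- f belongs to the neighborhood
    rw [hO_def]
    constructor
    · simp only [mem_iInter, Finset.mem_range]
      intro k hk t ht
      obtain ⟨ht1, ht2⟩ := ht
      refine Hfseg k hk t ?_ ?_
      · rw [← hτcoe k hk.le]; exact_mod_cast ht1
      · rw [← hτcoe (k+1) hk]; exact_mod_cast ht2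
    · simp only [mem_iInter, Finset.mem_Ioo]
      rintro k ⟨h0, hk⟩
      exact mem_pathComponentIn_self (hfτ k h0 hk)
  · -- every loop in the neighborhood is homotopic to f
    rintro g ⟨hg1, hg2⟩
    simp only [mem_iInter, Finset.mem_range, Finset.mem_Ioo] at hg1 hg2
    have Hgseg : ∀ k, k < n → ∀ s : I, (k:ℝ)/(n:ℝ) ≤ (s:ℝ) →
        (s:ℝ) ≤ ((k+1:ℕ):ℝ)/(n:ℝ) → g s ∈ VV k := by
      intro k hk s h1 h2
      refine hg1 k hk ⟨?_, ?_⟩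
      · rw [← Subtype.coe_le_coe, hτcoe k hk.le]; exact h1
      · rw [← Subtype.coe_le_coe, hτcoe (k+1) hk]; exact h2
    have hjoin : ∀ k, 0 < k → k < n →
        JoinedIn (VV (k-1) ∩ VV k) (f (τ k)) (g (τ k)) := by
      intro k h0 hk
      exact hg2 k ⟨h0, hk⟩
    have hept : ∀ (p : Path x x) k, k ≤ n → p.extend ((k:ℝ)/(n:ℝ)) = p (τ k) := by
      intro p k hk
      rw [← hτcoe k hk]
      exact Path.extend_extends' p (τ k)
    have hεx : ∀ (p : Path x x) (k : ℕ), (k = 0 ∨ n ≤ k) → p.extend ((k:ℝ)/(n:ℝ)) = x := by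
      rintro p k (rfl | hnk)
      · simp
      · have h1 : (1:ℝ) ≤ (k:ℝ)/(n:ℝ) := by
          rw [le_div_iff₀ hn', one_mul]; exact_mod_cast hnk
        rw [Path.extend_of_one_le p h1]
    have hex : ∀ k : ℕ, ∃ p : Path (g.extend ((k:ℝ)/(n:ℝ))) (f.extend ((k:ℝ)/(n:ℝ))),
        (0 < k → k < n → range p ⊆ VV (k-1) ∩ VV k) ∧ ((k = 0 ∨ n ≤ k) → ∀ t, p t = x) := by
      intro k
      rcases Nat.eq_zero_or_pos k with rfl | h0
      · exact ⟨(Path.refl x).cast (hεx g 0 (Or.inl rfl)) (hεx f 0 (Or.inl rfl)),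
          fun h' _ => absurd h' (lt_irrefl 0), fun _ _ => rfl⟩
      · by_cases hk : k < n
        · obtain ⟨q, hq⟩ := hjoin k h0 hk
          refine ⟨(q.symm).cast (hept g k hk.le) (hept f k hk.le), fun _ _ => ?_, ?_⟩
          · have hrange : range ⇑((q.symm).cast (hept g k hk.le) (hept f k hk.le))
                = range ⇑q.symm := by rw [Path.cast_coe]
            rw [hrange, Path.symm_range]
            exact range_subset_iff.2 hq
          · rintro (rfl | hnk)
            · omega
            · omega
        · refine ⟨(Path.refl x).cast (hεx g k (Or.inr (by omega))) (hεx f k (Or.inr (by omega))),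
            fun _ hkn => absurd hkn hk, fun _ _ => rfl⟩
    choose hpath hprop using hex
    exact main_induction g f n hn VV (fun k _ => hVVgood k) Hgseg Hfseg hpath
      (fun k h0 hk => (hprop k).1 h0 hk)
      (fun t => (hprop 0).2 (Or.inl rfl) t)
      (fun t => (hprop n).2 (Or.inr le_rfl) t)


lemma discrete {X : Type*} [TopologicalSpace X] [LocallyPathConnectedSpace X]
    (hX : SemilocallySimplyConnected X) (x : X) :
    DiscreteTopology (Path.Homotopic.Quotient x x) := by
  apply discreteTopology_iff_isOpen_singleton.mpr
  intro q
  refine Quotient.inductionOn q ?_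
  intro f
  have hq : IsOpen ((Quotient.mk' : Path x x → Path.Homotopic.Quotient x x) ⁻¹' {⟦f⟧}) := by
    rw [isOpen_iff_mem_nhds]
    intro g hg
    obtain ⟨N, hNo, hgN, hN⟩ := homotopy_class_nhds hX x g
    refine Filter.mem_of_superset (hNo.mem_nhds hgN) ?_
    intro p hp
    simp only [mem_preimage, mem_singleton_iff] at hg ⊢
    exact Quotient.sound ((hN p hp).trans (Quotient.exact hg))
  exact (isQuotientMap_quotient_mk').isOpen_preimage.mp hq

theorem final {X : Type*} [TopologicalSpace X] [LocallyPathConnectedSpace X]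
    (hX : SemilocallySimplyConnected X) (x : X) :
    Continuous (fun p : Path.Homotopic.Quotient x x × Path.Homotopic.Quotient x x =>
      p.1.trans p.2) := by
  have := discrete hX x
  exact continuous_of_discreteTopology

end MyAux

theorem continuous_mul_topological_fundamental_group
    {X : Type*} [TopologicalSpace X] [LocallyPathConnectedSpace X]
    (hX : SemilocallySimplyConnected X) (x : X) :
    Continuous (fun p : Path.Homotopic.Quotient x x × Path.Homotopic.Quotient x x =>
      p.1.trans p.2) := by
  have := MyAux.discrete hX x
  exact continuous_of_discreteTopology
end
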